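/- arXiv:2009.12649 — 6 statements merged into one kernel-verified Lean document; each statement's English description precedes it below -/
import Mathlib

section
/- Fenchel duality for the monotone maximization: if f is concave and differentiable on the cone C = {y ∈ ℝ^m : 0 < y_1 ≤ y_2 ≤ ... ≤ y_m}, then ŷ ∈ C maximizes f over C if and only if Σ_{j=i}^m ∂f/∂y_j(ŷ) ≤ 0 for all i = 1,...,m and Σ_{i=1}^m ŷ_i · ∂f/∂y_i(ŷ) = 0. -/
open Finset

section helpers

variable {E : Type*} [NormedAddCommGroup E] [NormedSpace ℝ E]

lemma lineHasDerivAt (f : E → ℝ) (hdiff : Differentiable ℝ f) (a d : E) :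
    HasDerivAt (fun t : ℝ => f (a + t • d)) (fderiv ℝ f a d) 0 := by
  have hline : HasDerivAt (fun t : ℝ => a + t • d) d 0 := by
    simpa using ((hasDerivAt_id (0:ℝ)).smul_const d).const_add a
  have := (hdiff (a + (0:ℝ) • d)).hasFDerivAt.comp_hasDerivAt 0 hline
  rw [zero_smul, add_zero] at this; exact this

lemma dirDeriv_nonpos (f : E → ℝ) (hdiff : Differentiable ℝ f) (a d : E)
    (hmax : ∀ t : ℝ, 0 < t → t < 1 → f (a + t • d) ≤ f a) :
    fderiv ℝ f a d ≤ 0 := by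
  have h := (lineHasDerivAt f hdiff a d)
  rw [hasDerivAt_iff_tendsto_slope] at h
  have h' : Filter.Tendsto (slope (fun t : ℝ => f (a + t • d)) 0) (nhdsWithin 0 (Set.Ioi 0))
      (nhds (fderiv ℝ f a d)) :=
    h.mono_left (nhdsWithin_mono 0 (fun x hx => ne_of_gt hx))
  refine le_of_tendsto h' ?_
  filter_upwards [Ioo_mem_nhdsGT_of_mem (by simp : (0:ℝ) ∈ Set.Ico (0:ℝ) 1)] with t ht
  rw [slope_def_field]
  have h1 : f (a + t • d) - f (a + (0:ℝ) • d) ≤ 0 := by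
    rw [zero_smul, add_zero]; exact sub_nonpos.2 (hmax t ht.1 ht.2)
  exact div_nonpos_of_nonpos_of_nonneg h1 (by linarith [ht.1])

lemma grad_ineq {C : Set E} (f : E → ℝ) (hconc : ConcaveOn ℝ C f)
    (hdiff : Differentiable ℝ f) {a y : E} (ha : a ∈ C) (hy : y ∈ C) :
    f y - f a ≤ fderiv ℝ f a (y - a) := by
  have h := (lineHasDerivAt f hdiff a (y - a))
  rw [hasDerivAt_iff_tendsto_slope] at h
  have h' : Filter.Tendsto (slope (fun t : ℝ => f (a + t • (y - a))) 0) (nhdsWithin 0 (Set.Ioi 0))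
      (nhds (fderiv ℝ f a (y - a))) :=
    h.mono_left (nhdsWithin_mono 0 (fun x hx => ne_of_gt hx))
  refine ge_of_tendsto h' ?_
  filter_upwards [Ioo_mem_nhdsGT_of_mem (by simp : (0:ℝ) ∈ Set.Ico (0:ℝ) 1)] with t ht
  rw [slope_def_field]
  have hcomb := hconc.2 ha hy (by linarith [ht.2] : (0:ℝ) ≤ 1 - t) (le_of_lt ht.1) (by ring)
  have heq : (1 - t) • a + t • y = a + t • (y - a) := by
    rw [smul_sub, sub_smul, one_smul]; abel
  rw [heq] at hcomb
  simp only [smul_eq_mul] at hcomb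
  rw [zero_smul, add_zero, sub_zero, le_div_iff₀ ht.1]
  nlinarith [hcomb]

end helpers

/-- Abel summation bound over `ℕ`. -/
lemma abel_nonpos (n : ℕ) (Y G : ℕ → ℝ) (h0 : 0 ≤ Y 0)
    (hmono : ∀ i, i + 1 < n → Y i ≤ Y (i + 1))
    (hS : ∀ i, i < n → ∑ j ∈ Finset.Ico i n, G j ≤ 0) :
    ∑ j ∈ Finset.range n, Y j * G j ≤ 0 := by
  classical
  set c : ℕ → ℝ := fun i => if i = 0 then Y 0 else Y i - Y (i - 1) with hc
  have hYc : ∀ j, j < n → ∑ i ∈ Finset.range (j + 1), c i = Y j := by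
    intro j hj
    induction j with
    | zero => simp [hc]
    | succ k ih =>
      rw [Finset.sum_range_succ, ih (by omega)]
      simp [hc]
  have key : ∑ j ∈ Finset.range n, Y j * G j
      = ∑ i ∈ Finset.range n, c i * ∑ j ∈ Finset.Ico i n, G j := by
    have step1 : ∀ j ∈ Finset.range n,
        Y j * G j = ∑ i ∈ Finset.range n, (if i ≤ j then c i * G j else 0) := by
      intro j hj
      rw [Finset.mem_range] at hj
      rw [Finset.sum_ite, Finset.sum_const_zero, add_zero]
      have hfil : Finset.filter (fun i => i ≤ j) (Finset.range n) = Finset.range (j + 1) := by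
        ext x; simp [Finset.mem_filter, Finset.mem_range]; omega
      rw [hfil, ← Finset.sum_mul, hYc j hj]
    rw [Finset.sum_congr rfl step1, Finset.sum_comm]
    refine Finset.sum_congr rfl ?_
    intro i hi
    rw [Finset.mul_sum, Finset.sum_ite, Finset.sum_const_zero, add_zero]
    have hfil : Finset.filter (fun j => i ≤ j) (Finset.range n) = Finset.Ico i n := by
      ext x; simp [Finset.mem_filter, Finset.mem_range, Finset.mem_Ico]; omega
    rw [hfil]
  rw [key]
  refine Finset.sum_nonpos ?_
  intro i hi
  rw [Finset.mem_range] at hi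
  have hci : 0 ≤ c i := by
    rcases Nat.eq_zero_or_pos i with h | h
    · simp [hc, h, h0]
    · have : i - 1 + 1 = i := by omega
      have hm := hmono (i - 1) (by omega)
      rw [this] at hm
      simp only [hc]
      rw [if_neg (by omega)]
      linarith
  exact mul_nonpos_of_nonneg_of_nonpos hci (hS i hi)

/-- Fenchel characterization of the maximizer of a concave differentiable
function over the ordered cone `C = {y : 0 < y_1 ≤ y_2 ≤ ... ≤ y_m}`. -/
theorem fenchel_conditions_iff_maximizer
    (m : ℕ) (hm : 0 < m)
    (C : Set (Fin m → ℝ))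
    (hC : C = {y : Fin m → ℝ | 0 < y ⟨0, hm⟩ ∧ Monotone y})
    (f : (Fin m → ℝ) → ℝ)
    (hconc : ConcaveOn ℝ C f)
    (hdiff : Differentiable ℝ f)
    (yhat : Fin m → ℝ) (hyhat : yhat ∈ C) :
    (∀ y ∈ C, f y ≤ f yhat) ↔
      ((∀ i : Fin m, ∑ j ∈ Finset.Ici i, fderiv ℝ f yhat (Pi.single j 1) ≤ 0) ∧
        ∑ i, yhat i * fderiv ℝ f yhat (Pi.single i 1) = 0) := by
  classical
  subst hC
  obtain ⟨hy0, hymono⟩ := hyhat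
  set g : (Fin m → ℝ) →L[ℝ] ℝ := fderiv ℝ f yhat with hg
  -- g applied to any vector is the weighted sum of its values on the basis
  have gsum : ∀ v : Fin m → ℝ, g v = ∑ i, v i * g (Pi.single i 1) := by
    intro v
    have hv : v = ∑ i, v i • (Pi.single i 1 : Fin m → ℝ) := by
      funext k
      simp [Finset.sum_apply, Pi.single_apply]
    conv_lhs => rw [hv]
    rw [map_sum]
    refine Finset.sum_congr rfl fun i _ => ?_
    rw [map_smul, smul_eq_mul]
  -- the extreme directions
  have dind : ∀ i : Fin m, (fun k : Fin m => if i ≤ k then (1:ℝ) else 0)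
      = ∑ j ∈ Finset.Ici i, Pi.single j (1:ℝ) := by
    intro i
    funext k
    rw [Finset.sum_apply]
    simp only [Pi.single_apply]
    rw [Finset.sum_ite_eq (Finset.Ici i) k (fun _ => (1:ℝ))]
    simp [Finset.mem_Ici]
  have g_dind : ∀ i : Fin m, g (fun k : Fin m => if i ≤ k then (1:ℝ) else 0)
      = ∑ j ∈ Finset.Ici i, g (Pi.single j 1) := by
    intro i; rw [dind i, map_sum]
  have g_yhat : g yhat = ∑ i, yhat i * g (Pi.single i 1) := gsum yhat
  constructor
  · -- maximizer → conditions
    intro hmax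
    have hmem : ∀ (d : Fin m → ℝ), (0 ≤ d ⟨0, hm⟩) → Monotone d →
        ∀ t : ℝ, 0 < t → (yhat + t • d) ∈ {y : Fin m → ℝ | 0 < y ⟨0, hm⟩ ∧ Monotone y} := by
      intro d hd0 hdmono t ht
      constructor
      · have : (0:ℝ) ≤ t * d ⟨0, hm⟩ := mul_nonneg ht.le hd0
        simp only [Pi.add_apply, Pi.smul_apply, smul_eq_mul]
        linarith
      · intro a b hab
        simp only [Pi.add_apply, Pi.smul_apply, smul_eq_mul]
        have h1 := hymono hab
        have h2 := mul_le_mul_of_nonneg_left (hdmono hab) ht.le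
        linarith
    refine ⟨?_, ?_⟩
    · intro i
      rw [← g_dind i]
      refine dirDeriv_nonpos f hdiff yhat _ ?_
      intro t ht _
      have hdmono : Monotone (fun k : Fin m => if i ≤ k then (1:ℝ) else 0) := by
        intro a b hab
        by_cases h1 : i ≤ a
        · simp [h1, h1.trans hab]
        · by_cases h2 : i ≤ b <;> simp [h1, h2]
      exact hmax _ (hmem _ (by positivity) hdmono t ht)
    · rw [← g_yhat]
      have h1 : g yhat ≤ 0 := by
        refine dirDeriv_nonpos f hdiff yhat yhat ?_
        intro t ht _
        refine hmax _ ?_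
        have heq : yhat + t • yhat = (1 + t) • yhat := by
          rw [add_smul, one_smul]
        rw [heq]
        refine ⟨?_, ?_⟩
        · simp only [Pi.smul_apply, smul_eq_mul]
          have : (0:ℝ) < 1 + t := by linarith
          positivity
        · intro a b hab
          simp only [Pi.smul_apply, smul_eq_mul]
          exact mul_le_mul_of_nonneg_left (hymono hab) (by linarith)
      have h2 : g (-yhat) ≤ 0 := by
        refine dirDeriv_nonpos f hdiff yhat (-yhat) ?_
        intro t ht ht1
        refine hmax _ ?_
        have heq : yhat + t • (-yhat) = (1 - t) • yhat := by
          rw [smul_neg, sub_smul, one_smul]; abel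
        rw [heq]
        refine ⟨?_, ?_⟩
        · simp only [Pi.smul_apply, smul_eq_mul]
          have : (0:ℝ) < 1 - t := by linarith
          positivity
        · intro a b hab
          simp only [Pi.smul_apply, smul_eq_mul]
          exact mul_le_mul_of_nonneg_left (hymono hab) (by linarith)
      rw [map_neg] at h2
      linarith
  · -- conditions → maximizer
    rintro ⟨hS, hsum⟩ y hy
    obtain ⟨hy0', hymono'⟩ := hy
    have hgy_nonpos : g y ≤ 0 := by
      -- transfer to ℕ and use Abel summation
      set Y : ℕ → ℝ := fun n => if h : n < m then y ⟨n, h⟩ else 0 with hY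
      set G : ℕ → ℝ := fun n => if h : n < m then g (Pi.single (⟨n, h⟩ : Fin m) 1) else 0 with hG
      have htail : ∀ i, i < m → ∑ j ∈ Finset.Ico i m, G j ≤ 0 := by
        intro i hi
        have := hS ⟨i, hi⟩
        have heq : ∑ j ∈ Finset.Ico i m, G j
            = ∑ j ∈ Finset.Ici (⟨i, hi⟩ : Fin m), g (Pi.single j 1) := by
          rw [show Finset.Ici (⟨i, hi⟩ : Fin m)
              = Finset.filter (fun j : Fin m => (⟨i, hi⟩ : Fin m) ≤ j) Finset.univ by
            ext x; simp]
          rw [Finset.sum_filter]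
          rw [show ∑ j : Fin m, (if (⟨i, hi⟩ : Fin m) ≤ j then g (Pi.single j 1) else 0)
              = ∑ j ∈ Finset.range m, (if i ≤ j then G j else 0) from ?_]
          · rw [Finset.sum_ite, Finset.sum_const_zero, add_zero]
            have hfil : Finset.filter (fun j => i ≤ j) (Finset.range m) = Finset.Ico i m := by
              ext x; simp [Finset.mem_filter, Finset.mem_range, Finset.mem_Ico]; omega
            rw [hfil]
          · rw [← Fin.sum_univ_eq_sum_range (fun j => if i ≤ j then G j else 0) m]
            refine Finset.sum_congr rfl fun j _ => ?_
            rcases j with ⟨jv, hj⟩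
            simp only [hG, Fin.le_def, dif_pos hj]
        rw [heq]
        exact this
      have hsum_eq : g y = ∑ j ∈ Finset.range m, Y j * G j := by
        rw [gsum y, ← Fin.sum_univ_eq_sum_range (fun j => Y j * G j) m]
        refine Finset.sum_congr rfl fun j _ => ?_
        simp only [hY, hG]
        rw [dif_pos j.isLt, dif_pos j.isLt]
      rw [hsum_eq]
      refine abel_nonpos m Y G ?_ ?_ htail
      · simp only [hY]
        rw [dif_pos hm]
        exact hy0'.le
      · intro i hi
        simp only [hY]
        rw [dif_pos (by omega : i < m), dif_pos hi]
        exact hymono' (by simp [Fin.le_def])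
    have hgrad := grad_ineq f hconc hdiff
        (show yhat ∈ {y : Fin m → ℝ | 0 < y ⟨0, hm⟩ ∧ Monotone y} from ⟨hy0, hymono⟩)
        (show y ∈ {y : Fin m → ℝ | 0 < y ⟨0, hm⟩ ∧ Monotone y} from ⟨hy0', hymono'⟩)
    have : g (y - yhat) = g y - g yhat := map_sub g y yhat
    rw [this] at hgrad
    have hgz : g yhat = 0 := by rw [g_yhat]; exact hsum
    rw [hgz] at hgrad
    linarith
end

section
/- Zero-mean property of the score: let G be a distribution function with G(s) = 0 for s ≤ 0 and G(s) = 1 for s ≥ M₁, let φ : ℝ → ℝ satisfy φ(s) = 0 for s ≥ M₁ and φ(0) = 0, and let M ≥ M₁. If E is Uniform[0,M], V given E is Uniform[0,E], W has distribution G independent of V, S = V + W, and Δ = 1_{S≤E}, then the score θ(E,S,Δ) = Δ·φ(S)/G(S) + (1−Δ)·(φ(S)−φ(S−E))/(G(S)−G(S−E)) (with 0/0 := 0) has expectation E[θ(E,S,Δ)] = 0. -/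
open MeasureTheory
open scoped ENNReal NNReal

/-- Zero-mean property of the score `θ` in the incubation-time model:
`E` is Uniform[0,M], `V` given `E` is Uniform[0,E], `W ~ G` independent,
`S = V + W`, `Δ = 1_{S ≤ E}`.  Then `E[θ(E,S,Δ)] = 0`. -/
theorem score_has_zero_mean
    (Ω : Type*) [MeasurableSpace Ω] (ℙ : Measure Ω) [IsProbabilityMeasure ℙ]
    (M M₁ : ℝ) (hM₁ : 0 < M₁) (hMM₁ : M₁ ≤ M)
    (Ev V W : Ω → ℝ) (hEv : Measurable Ev) (hV : Measurable V) (hW : Measurable W)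
    -- joint law of (E, V): density 1/(M e) on {0 < v < e < M}
    (hjoint : Measure.map (fun ω => (Ev ω, V ω)) ℙ =
      volume.withDensity (fun p =>
        ENNReal.ofReal (if 0 < p.2 ∧ p.2 < p.1 ∧ p.1 < M then 1 / (M * p.1) else 0)))
    (G : ℝ → ℝ) (hGmono : Monotone G) (hGcdf : ∀ s, Measure.map W ℙ (Set.Iic s) = ENNReal.ofReal (G s))
    (hG0 : ∀ s : ℝ, s ≤ 0 → G s = 0) (hG1 : ∀ s : ℝ, M₁ ≤ s → G s = 1)
    (hindep : ProbabilityTheory.IndepFun (fun ω => (Ev ω, V ω)) W ℙ)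
    (φ : ℝ → ℝ) (hφcont : Continuous φ)
    (hφ0 : φ 0 = 0) (hφM₁ : ∀ s : ℝ, M₁ ≤ s → φ s = 0)
    (C : ℝ) (hφAC : ∀ s t : ℝ, |φ s - φ t| ≤ C * |G s - G t|)
    (θ : ℝ → ℝ → ℝ)
    (hθ : ∀ e s : ℝ, θ e s =
      if s ≤ e then φ s / G s else (φ s - φ (s - e)) / (G s - G (s - e))) :
    ∫ ω, θ (Ev ω) (V ω + W ω) ∂ℙ = 0 := by
  -- basic facts
  have hM : 0 < M := lt_of_lt_of_le hM₁ hMM₁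
  have hGnn : ∀ s, 0 ≤ G s := by
    intro s
    rcases le_or_gt s 0 with h | h
    · rw [hG0 s h]
    · rw [← hG0 0 le_rfl]; exact hGmono h.le
  have hC : 0 ≤ C := by
    have := hφAC M₁ 0
    rw [hφM₁ M₁ le_rfl, hφ0, hG1 M₁ le_rfl, hG0 0 le_rfl] at this
    simpa using this
  have hφabs : ∀ s, |φ s| ≤ C * |G s| := by
    intro s; have := hφAC s 0; rwa [hφ0, hG0 0 le_rfl, sub_zero, sub_zero] at this
  have hφzero : ∀ s : ℝ, s ≤ 0 → φ s = 0 := by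
    intro s hs
    have := hφabs s
    rw [hG0 s hs] at this
    simpa using this
  have hGmeas : Measurable G := hGmono.measurable
  have hθbd : ∀ e s, |θ e s| ≤ C := by
    intro e s
    rw [hθ]
    split_ifs with h
    · rcases eq_or_ne (G s) 0 with hg | hg
      · simp [hg, hC]
      · rw [abs_div, div_le_iff₀ (abs_pos.mpr hg)]
        exact hφabs s
    · rcases eq_or_ne (G s - G (s - e)) 0 with hg | hg
      · simp [hg, hC]
      · rw [abs_div, div_le_iff₀ (abs_pos.mpr hg)]
        exact hφAC s (s - e)
  have hθmeas : Measurable (fun p : ℝ × ℝ => θ p.1 p.2) := by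
    have : (fun p : ℝ × ℝ => θ p.1 p.2) = fun p : ℝ × ℝ =>
        if p.2 ≤ p.1 then φ p.2 / G p.2 else (φ p.2 - φ (p.2 - p.1)) / (G p.2 - G (p.2 - p.1)) :=
      funext fun p => hθ p.1 p.2
    rw [this]
    refine Measurable.ite (measurableSet_le measurable_snd measurable_fst) ?_ ?_
    · exact (hφcont.measurable.comp measurable_snd).div (hGmeas.comp measurable_snd)
    · exact ((hφcont.measurable.comp measurable_snd).sub
        (hφcont.measurable.comp (measurable_snd.sub measurable_fst))).div
        ((hGmeas.comp measurable_snd).sub (hGmeas.comp (measurable_snd.sub measurable_fst)))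
  have key : ∀ e s : ℝ, θ e s * (G s - G (s - e)) = φ s - φ (s - e) := by
    intro e s
    rw [hθ]
    split_ifs with h
    · have h1 : G (s - e) = 0 := hG0 _ (by linarith)
      have h2 : φ (s - e) = 0 := hφzero _ (by linarith)
      rw [h1, h2, sub_zero, sub_zero]
      rcases eq_or_ne (G s) 0 with hg | hg
      · have : φ s = 0 := by
          have := hφabs s
          rw [hg] at this
          simpa using this
        simp [hg, this]
      · exact div_mul_cancel₀ _ hg
    · rcases eq_or_ne (G s - G (s - e)) 0 with hg | hg
      · have : φ s - φ (s - e) = 0 := by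
          have := hφAC s (s - e)
          rw [hg] at this
          simpa using this
        simp [hg, this]
      · exact div_mul_cancel₀ _ hg
  -- φ integrable, shift integral
  have hφout : ∀ x : ℝ, x ∉ Set.Icc 0 M₁ → φ x = 0 := by
    intro x hx
    rw [Set.mem_Icc, not_and_or] at hx
    rcases hx with hx | hx
    · exact hφzero x (by push_neg at hx; linarith)
    · exact hφM₁ x (by push_neg at hx; linarith)
  have hφsupp : HasCompactSupport φ := HasCompactSupport.intro isCompact_Icc hφout
  have hφint : Integrable φ volume := hφcont.integrable_of_hasCompactSupport hφsupp
  have hψ : ∀ e : ℝ, ∫ s, (φ s - φ (s - e)) = 0 := by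
    intro e
    have hsh : Integrable (fun s => φ (s - e)) volume :=
      (hφcont.comp (continuous_sub_right e)).integrable_of_hasCompactSupport
        (HasCompactSupport.intro (isCompact_Icc (a := e) (b := M₁ + e)) (fun x hx => by
          refine hφout (x - e) ?_
          rw [Set.mem_Icc] at hx ⊢
          intro hc; exact hx ⟨by linarith [hc.1], by linarith [hc.2]⟩))
    rw [integral_sub hφint hsh, integral_sub_right_eq_self φ e, sub_self]
  -- measures
  set μW : Measure ℝ := Measure.map W ℙ with hμWdef
  haveI : IsProbabilityMeasure μW := Measure.isProbabilityMeasure_map hW.aemeasurable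
  set dens : ℝ × ℝ → ℝ :=
    fun p => if 0 < p.2 ∧ p.2 < p.1 ∧ p.1 < M then 1 / (M * p.1) else 0 with hdensdef
  have hdensmeas : Measurable dens := by
    rw [hdensdef]
    refine Measurable.ite ?_ (measurable_const.div (measurable_const.mul measurable_fst))
      measurable_const
    exact (measurableSet_lt measurable_const measurable_snd).inter
      ((measurableSet_lt measurable_snd measurable_fst).inter
        (measurableSet_lt measurable_fst measurable_const))
  have hdensnn : ∀ p, 0 ≤ dens p := by
    intro p; rw [hdensdef]; dsimp only
    split_ifs with h
    · have h1 : 0 < p.1 := lt_trans h.1 h.2.1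
      positivity
    · exact le_rfl
  have hjoint' : Measure.map (fun ω => (Ev ω, V ω)) ℙ =
      volume.withDensity (fun p => ENNReal.ofReal (dens p)) := by
    simp only [hdensdef]; exact hjoint
  haveI hνprob : IsProbabilityMeasure (volume.withDensity (fun p => ENNReal.ofReal (dens p))) := by
    rw [← hjoint']; exact Measure.isProbabilityMeasure_map (hEv.prodMk hV).aemeasurable
  -- step 1 : transfer to the product measure
  have hpairW : Measurable fun ω => ((Ev ω, V ω), W ω) := (hEv.prodMk hV).prodMk hW
  have hFmeas : Measurable (fun p : (ℝ × ℝ) × ℝ => θ p.1.1 (p.1.2 + p.2)) :=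
    hθmeas.comp (measurable_fst.fst.prodMk (measurable_fst.snd.add measurable_snd))
  have hmapprod : Measure.map (fun ω => ((Ev ω, V ω), W ω)) ℙ =
      (volume.withDensity (fun p => ENNReal.ofReal (dens p))).prod μW := by
    rw [← hjoint', hμWdef]
    exact (ProbabilityTheory.indepFun_iff_map_prod_eq_prod_map_map
      (hEv.prodMk hV).aemeasurable hW.aemeasurable).mp hindep
  have h1 : ∫ ω, θ (Ev ω) (V ω + W ω) ∂ℙ = ∫ p : (ℝ × ℝ) × ℝ, θ p.1.1 (p.1.2 + p.2)
      ∂((volume.withDensity (fun p => ENNReal.ofReal (dens p))).prod μW) := by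
    rw [← hmapprod, integral_map hpairW.aemeasurable hFmeas.aestronglyMeasurable]
  -- step 2 : first Fubini
  have hFint : Integrable (fun p : (ℝ × ℝ) × ℝ => θ p.1.1 (p.1.2 + p.2))
      ((volume.withDensity (fun p => ENNReal.ofReal (dens p))).prod μW) :=
    ⟨hFmeas.aestronglyMeasurable, HasFiniteIntegral.of_bounded (C := C)
      (Filter.Eventually.of_forall fun p => by
        simpa [Real.norm_eq_abs] using hθbd p.1.1 (p.1.2 + p.2))⟩
  have h2 : ∫ p : (ℝ × ℝ) × ℝ, θ p.1.1 (p.1.2 + p.2)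
        ∂((volume.withDensity (fun p => ENNReal.ofReal (dens p))).prod μW)
      = ∫ p : ℝ × ℝ, (∫ w, θ p.1 (p.2 + w) ∂μW)
        ∂(volume.withDensity (fun p => ENNReal.ofReal (dens p))) :=
    integral_prod _ hFint
  -- the averaged score
  have hgsm : StronglyMeasurable (fun p : ℝ × ℝ => ∫ w, θ p.1 (p.2 + w) ∂μW) :=
    hFmeas.stronglyMeasurable.integral_prod_right'
  have hgbd : ∀ p : ℝ × ℝ, |∫ w, θ p.1 (p.2 + w) ∂μW| ≤ C := by
    intro p
    have hb : ∀ᵐ w ∂μW, ‖θ p.1 (p.2 + w)‖ ≤ C :=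
      Filter.Eventually.of_forall fun w => by
        simpa [Real.norm_eq_abs] using hθbd p.1 (p.2 + w)
    have := MeasureTheory.norm_integral_le_of_norm_le_const (μ := μW)
      (f := fun w => θ p.1 (p.2 + w)) hb
    simpa [Real.norm_eq_abs] using this
  -- step 3 : unfold the density
  have h3 : ∫ p : ℝ × ℝ, (∫ w, θ p.1 (p.2 + w) ∂μW)
        ∂(volume.withDensity (fun p => ENNReal.ofReal (dens p)))
      = ∫ p : ℝ × ℝ, dens p * (∫ w, θ p.1 (p.2 + w) ∂μW) := by
    have hd : (fun p : ℝ × ℝ => ENNReal.ofReal (dens p)) =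
        fun p : ℝ × ℝ => ((fun q : ℝ × ℝ => (dens q).toNNReal) p : ℝ≥0∞) := rfl
    rw [hd, integral_withDensity_eq_integral_smul hdensmeas.real_toNNReal]
    congr 1
    funext p
    simp [NNReal.smul_def, Real.coe_toNNReal _ (hdensnn p)]
  -- step 4 : second Fubini, on ℝ × ℝ
  have hdensint : Integrable dens volume := by
    refine ⟨hdensmeas.aestronglyMeasurable, ?_⟩
    have h1 : ∫⁻ p, ‖dens p‖ₑ ∂(volume : Measure (ℝ × ℝ))
        = volume.withDensity (fun p => ENNReal.ofReal (dens p)) Set.univ := by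
      rw [withDensity_apply _ MeasurableSet.univ, setLIntegral_univ]
      congr 1; funext p; rw [Real.enorm_eq_ofReal (hdensnn p)]
    rw [hasFiniteIntegral_def, h1]
    simp
  have hmulint : Integrable (fun p : ℝ × ℝ => dens p * (∫ w, θ p.1 (p.2 + w) ∂μW)) volume :=
    (Integrable.bdd_mul hdensint hgsm.aestronglyMeasurable
      (Filter.Eventually.of_forall fun p => by simpa [Real.norm_eq_abs] using hgbd p)).congr
      (Filter.Eventually.of_forall fun p => mul_comm _ _)
  have h4 : ∫ p : ℝ × ℝ, dens p * (∫ w, θ p.1 (p.2 + w) ∂μW)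
      = ∫ e : ℝ, ∫ v : ℝ, dens (e, v) * (∫ w, θ e (v + w) ∂μW) := by
    rw [MeasureTheory.Measure.volume_eq_prod] at hmulint ⊢
    exact integral_prod _ hmulint
  -- step 5 : the inner integral vanishes for every e
  have hinner : ∀ e : ℝ, (∫ v : ℝ, dens (e, v) * (∫ w, θ e (v + w) ∂μW)) = 0 := by
    intro e
    by_cases he : 0 < e ∧ e < M
    swap
    · have hz : ∀ v : ℝ, dens (e, v) = 0 := by
        intro v; rw [hdensdef]; dsimp only
        rw [if_neg]; intro hcon; exact he ⟨lt_trans hcon.1 hcon.2.1, hcon.2.2⟩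
      simp [hz]
    obtain ⟨he0, heM⟩ := he
    -- restrict to Ioo 0 e
    have hrw : (fun v => dens (e, v) * (∫ w, θ e (v + w) ∂μW))
        = fun v => (Set.Ioo (0:ℝ) e).indicator
            (fun v => (1 / (M * e)) * (∫ w, θ e (v + w) ∂μW)) v := by
      funext v
      rw [hdensdef]; simp only [Set.indicator, Set.mem_Ioo]
      by_cases hv : 0 < v ∧ v < e
      · rw [if_pos ⟨hv.1, hv.2, heM⟩, if_pos hv]
      · rw [if_neg, if_neg hv, zero_mul]
        intro hc; exact hv ⟨hc.1, hc.2.1⟩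
    rw [hrw, integral_indicator measurableSet_Ioo, integral_const_mul]
    -- it suffices that the set integral vanishes
    suffices hK : (∫ v in Set.Ioo (0:ℝ) e, (∫ w, θ e (v + w) ∂μW)) = 0 by
      rw [hK, mul_zero]
    haveI hfinres : IsFiniteMeasure (volume.restrict (Set.Ioo (0:ℝ) e)) :=
      ⟨by rw [Measure.restrict_apply_univ]; exact measure_Ioo_lt_top⟩
    -- Fubini: swap v and w
    have hswap1 : (∫ v in Set.Ioo (0:ℝ) e, (∫ w, θ e (v + w) ∂μW))
        = ∫ w, (∫ v in Set.Ioo (0:ℝ) e, θ e (v + w)) ∂μW := by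
      apply integral_integral_swap
      refine ⟨?_, HasFiniteIntegral.of_bounded (C := C)
        (Filter.Eventually.of_forall fun q => by
          simpa [Real.norm_eq_abs, Function.uncurry_def] using hθbd e (q.1 + q.2))⟩
      exact (hθmeas.comp
        (measurable_const.prodMk (measurable_fst.add measurable_snd))).aestronglyMeasurable
    -- translation v ↦ v + w
    have htrans : ∀ w : ℝ, (∫ v in Set.Ioo (0:ℝ) e, θ e (v + w))
        = ∫ s, (Set.Ioo w (w + e)).indicator (fun s => θ e s) s := by
      intro w
      rw [← integral_indicator measurableSet_Ioo]
      have heq : (fun v => (Set.Ioo (0:ℝ) e).indicator (fun v => θ e (v + w)) v)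
          = fun v => (Set.Ioo w (w + e)).indicator (fun s => θ e s) (v + w) := by
        funext v; simp only [Set.indicator, Set.mem_Ioo]
        by_cases hv : 0 < v ∧ v < e
        · rw [if_pos hv, if_pos ⟨by linarith [hv.1], by linarith [hv.2]⟩]
        · rw [if_neg hv, if_neg]
          intro hc; exact hv ⟨by linarith [hc.1], by linarith [hc.2]⟩
      rw [heq]
      exact integral_add_right_eq_self
        (fun s => (Set.Ioo w (w + e)).indicator (fun s => θ e s) s) w
    -- Fubini: swap w and s
    have hAmeas : MeasurableSet {q : ℝ × ℝ | q.1 < q.2 ∧ q.2 < q.1 + e} :=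
      (measurableSet_lt measurable_fst measurable_snd).inter
        (measurableSet_lt measurable_snd (measurable_fst.add measurable_const))
    have hind_eq : ∀ w s : ℝ, (Set.Ioo w (w + e)).indicator (fun s => θ e s) s
        = Set.indicator {q : ℝ × ℝ | q.1 < q.2 ∧ q.2 < q.1 + e} (fun q => θ e q.2) (w, s) := by
      intro w s
      simp only [Set.indicator, Set.mem_Ioo, Set.mem_setOf_eq]
    have hswap2 : (∫ w, (∫ s, (Set.Ioo w (w + e)).indicator (fun s => θ e s) s) ∂μW)
        = ∫ s, (∫ w, (Set.Ioo w (w + e)).indicator (fun s => θ e s) s ∂μW) := by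
      apply integral_integral_swap
      have huncurry : (Function.uncurry fun w s => (Set.Ioo w (w + e)).indicator
          (fun s => θ e s) s)
          = fun q : ℝ × ℝ => Set.indicator {q : ℝ × ℝ | q.1 < q.2 ∧ q.2 < q.1 + e}
              (fun q => θ e q.2) q :=
        funext fun q => hind_eq q.1 q.2
      constructor
      · rw [huncurry]
        exact ((hθmeas.comp (measurable_const.prodMk measurable_snd)).indicator
          hAmeas).aestronglyMeasurable
      · rw [hasFiniteIntegral_def]
        have hle : ∀ q : ℝ × ℝ, ‖(Function.uncurry fun w s => (Set.Ioo w (w + e)).indicator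
            (fun s => θ e s) s) q‖ₑ
            ≤ Set.indicator {q : ℝ × ℝ | q.1 < q.2 ∧ q.2 < q.1 + e}
                (fun _ => ENNReal.ofReal C) q := by
          intro q
          rw [show (Function.uncurry fun w s => (Set.Ioo w (w + e)).indicator
              (fun s => θ e s) s) q = Set.indicator {q : ℝ × ℝ | q.1 < q.2 ∧ q.2 < q.1 + e}
              (fun q => θ e q.2) q from hind_eq q.1 q.2]
          by_cases hq : q ∈ {q : ℝ × ℝ | q.1 < q.2 ∧ q.2 < q.1 + e}
          · rw [Set.indicator_of_mem hq, Set.indicator_of_mem hq,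
              ← ofReal_norm]
            exact ENNReal.ofReal_le_ofReal (by simpa [Real.norm_eq_abs] using hθbd e q.2)
          · simp [Set.indicator_of_notMem hq]
        refine lt_of_le_of_lt (lintegral_mono hle) ?_
        rw [lintegral_indicator_const hAmeas]
        have hA : (μW.prod volume) {q : ℝ × ℝ | q.1 < q.2 ∧ q.2 < q.1 + e}
            = ENNReal.ofReal e := by
          rw [Measure.prod_apply hAmeas]
          have hsec : ∀ w : ℝ, volume (Prod.mk w ⁻¹' {q : ℝ × ℝ | q.1 < q.2 ∧ q.2 < q.1 + e})
              = ENNReal.ofReal e := by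
            intro w
            have : Prod.mk w ⁻¹' {q : ℝ × ℝ | q.1 < q.2 ∧ q.2 < q.1 + e}
                = Set.Ioo w (w + e) := by
              ext s; simp [Set.mem_Ioo]
            rw [this, Real.volume_Ioo]
            congr 1; ring
          simp only [hsec]
          rw [lintegral_const]
          simp
        rw [hA]
        exact ENNReal.mul_lt_top ENNReal.ofReal_lt_top ENNReal.ofReal_lt_top
    -- compute the inner w-integral
    have hwint : ∀ s : ℝ, (∫ w, (Set.Ioo w (w + e)).indicator (fun s => θ e s) s ∂μW)
        = θ e s * (μW (Set.Ioo (s - e) s)).toReal := by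
      intro s
      have heq : (fun w => (Set.Ioo w (w + e)).indicator (fun s => θ e s) s)
          = fun w => (Set.Ioo (s - e) s).indicator (fun _ => θ e s) w := by
        funext w; simp only [Set.indicator, Set.mem_Ioo]
        by_cases hw : w < s ∧ s < w + e
        · rw [if_pos hw, if_pos ⟨by linarith [hw.2], hw.1⟩]
        · rw [if_neg hw, if_neg]
          intro hc; exact hw ⟨hc.2, by linarith [hc.1]⟩
      rw [heq, integral_indicator_const (θ e s) measurableSet_Ioo, smul_eq_mul, mul_comm, measureReal_def]
    -- countably many atoms
    have hatoms : Set.Countable {t : ℝ | μW {t} ≠ 0} := by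
      have hcnt := Measure.countable_meas_level_set_pos (μ := μW)
        (g := fun t : ℝ => t) measurable_id
      refine Set.Countable.mono ?_ hcnt
      intro t ht
      simp only [Set.mem_setOf_eq] at ht ⊢
      rw [show {a : ℝ | a = t} = {t} from Set.setOf_eq_eq_singleton]
      exact pos_iff_ne_zero.mpr ht
    have haes : ∀ᵐ s : ℝ, μW {s} = 0 := by
      rw [ae_iff]
      exact Set.Countable.measure_zero hatoms _
    -- a.e. identification with φ s - φ (s - e)
    have hae : ∀ᵐ s : ℝ, θ e s * (μW (Set.Ioo (s - e) s)).toReal = φ s - φ (s - e) := by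
      filter_upwards [haes] with s hs
      have hiio : μW (Set.Iio s) = ENNReal.ofReal (G s) := by
        have h2 : μW (Set.Iic s) = μW (Set.Iio s) := by
          rw [← Set.Iio_union_right,
            measure_union (Set.disjoint_singleton_right.mpr (by simp))
              (measurableSet_singleton s), hs, add_zero]
        rw [← h2]
        exact hGcdf s
      have hioo : μW (Set.Ioo (s - e) s)
          = ENNReal.ofReal (G s) - ENNReal.ofReal (G (s - e)) := by
        have hsub : Set.Iio s \ Set.Iic (s - e) = Set.Ioo (s - e) s := by
          ext x
          simp only [Set.mem_diff, Set.mem_Iio, Set.mem_Iic, Set.mem_Ioo, not_le]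
          exact ⟨fun h => ⟨h.2, h.1⟩, fun h => ⟨h.2, h.1⟩⟩
        rw [← hsub, measure_diff (Set.Iic_subset_Iio.mpr (by linarith))
          measurableSet_Iic.nullMeasurableSet (measure_ne_top _ _), hiio, hGcdf (s - e)]
      rw [hioo, ← ENNReal.ofReal_sub _ (hGnn (s - e)),
        ENNReal.toReal_ofReal (sub_nonneg.mpr (hGmono (by linarith : s - e ≤ s)))]
      exact key e s
    calc (∫ v in Set.Ioo (0:ℝ) e, (∫ w, θ e (v + w) ∂μW))
        = ∫ w, (∫ v in Set.Ioo (0:ℝ) e, θ e (v + w)) ∂μW := hswap1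
      _ = ∫ w, (∫ s, (Set.Ioo w (w + e)).indicator (fun s => θ e s) s) ∂μW :=
          integral_congr_ae (Filter.Eventually.of_forall htrans)
      _ = ∫ s, (∫ w, (Set.Ioo w (w + e)).indicator (fun s => θ e s) s ∂μW) := hswap2
      _ = ∫ s, θ e s * (μW (Set.Ioo (s - e) s)).toReal :=
          integral_congr_ae (Filter.Eventually.of_forall hwint)
      _ = ∫ s, (φ s - φ (s - e)) := integral_congr_ae hae
      _ = 0 := hψ e
  -- conclusion
  rw [h1, h2, h3, h4]
  have hfin : (fun e : ℝ => ∫ v : ℝ, dens (e, v) * (∫ w, θ e (v + w) ∂μW)) = fun _ => (0:ℝ) :=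
    funext hinner
  rw [hfin]
  simp
end

section
/- Second-moment identity for the score: under the same model, E[θ(E,S,Δ)²] = (1/M)·∫_{0<s≤e≤M} φ(s)²/(e·G(s)) de ds + (1/M)·∫_{0<e<s} (φ(s)−φ(s−e))²/(e·(G(s)−G(s−e))) de ds, with 0/0 := 0. -/
open MeasureTheory

private lemma score_aux_div (M e d a : ℝ) :
    1 / (M * e) * d * (a / d) ^ 2 = 1 / M * (a ^ 2 / (e * d)) := by
  rcases eq_or_ne d 0 with hd | hd
  · simp [hd]
  rcases eq_or_ne e 0 with he | he
  · simp [he]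
  rcases eq_or_ne M 0 with hM | hM
  · simp [hM]
  field_simp


/-- Second-moment identity for the score in the incubation-time model:
`E[θ(E,S,Δ)²] = (1/M)∫_{0<s≤e≤M} φ(s)²/(e G(s)) + (1/M)∫_{0<e<s, e≤M}
(φ(s)-φ(s-e))²/(e (G(s)-G(s-e)))`. -/
theorem score_second_moment_identity
    (Ω : Type*) [MeasurableSpace Ω] (ℙ : Measure Ω) [IsProbabilityMeasure ℙ]
    (M M₁ : ℝ) (hM₁ : 0 < M₁) (hMM₁ : M₁ ≤ M)
    (Ev V W : Ω → ℝ) (hEv : Measurable Ev) (hV : Measurable V) (hW : Measurable W)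
    (hjoint : Measure.map (fun ω => (Ev ω, V ω)) ℙ =
      volume.withDensity (fun p =>
        ENNReal.ofReal (if 0 < p.2 ∧ p.2 < p.1 ∧ p.1 < M then 1 / (M * p.1) else 0)))
    (G : ℝ → ℝ) (hGmono : Monotone G) (hGcdf : ∀ s, Measure.map W ℙ (Set.Iic s) = ENNReal.ofReal (G s))
    (hG0 : ∀ s : ℝ, s ≤ 0 → G s = 0) (hG1 : ∀ s : ℝ, M₁ ≤ s → G s = 1)
    (hindep : ProbabilityTheory.IndepFun (fun ω => (Ev ω, V ω)) W ℙ)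
    (φ : ℝ → ℝ) (hφcont : Continuous φ)
    (hφ0 : φ 0 = 0) (hφM₁ : ∀ s : ℝ, M₁ ≤ s → φ s = 0)
    (C : ℝ) (hφAC : ∀ s t : ℝ, |φ s - φ t| ≤ C * |G s - G t|)
    (θ : ℝ → ℝ → ℝ)
    (hθ : ∀ e s : ℝ, θ e s =
      if s ≤ e then φ s / G s else (φ s - φ (s - e)) / (G s - G (s - e))) :
    ∫ ω, (θ (Ev ω) (V ω + W ω)) ^ 2 ∂ℙ =
      (1 / M) * (∫ p : ℝ × ℝ,
        if 0 < p.2 ∧ p.2 ≤ p.1 ∧ p.1 ≤ M then φ p.2 ^ 2 / (p.1 * G p.2) else 0)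
      + (1 / M) * (∫ p : ℝ × ℝ,
        if 0 < p.1 ∧ p.1 < p.2 ∧ p.1 ≤ M then
          (φ p.2 - φ (p.2 - p.1)) ^ 2 / (p.1 * (G p.2 - G (p.2 - p.1))) else 0) := by
  classical
  have hM : 0 < M := lt_of_lt_of_le hM₁ hMM₁
  have hGmeas : Measurable G := hGmono.measurable
  have hφmeas : Measurable φ := hφcont.measurable
  have hG0' : G 0 = 0 := hG0 0 le_rfl
  have hGnonneg : ∀ s, 0 ≤ G s := by
    intro s
    rcases le_or_gt s 0 with h | h
    · exact (hG0 s h).ge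
    · rw [← hG0']; exact hGmono h.le
  have hC : 0 ≤ C := by
    have h := hφAC M₁ 0
    rw [hG1 M₁ le_rfl, hG0 0 le_rfl, hφM₁ M₁ le_rfl, hφ0] at h
    simpa using h
  have hquot : ∀ a b : ℝ, |(φ a - φ b) / (G a - G b)| ≤ C := by
    intro a b
    rcases eq_or_ne (G a - G b) 0 with hd | hd
    · have h := hφAC a b
      rw [hd, abs_zero, mul_zero] at h
      have h2 : φ a - φ b = 0 := by
        have := abs_nonneg (φ a - φ b)
        have : |φ a - φ b| = 0 := le_antisymm h this
        exact abs_eq_zero.mp this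
      simp [hd, h2, hC]
    · rw [abs_div, div_le_iff₀ (abs_pos.mpr hd)]
      exact hφAC a b
  have hθbound : ∀ e s, |θ e s| ≤ C := by
    intro e s
    rw [hθ]
    split_ifs with h
    · have h2 : φ s / G s = (φ s - φ 0) / (G s - G 0) := by rw [hφ0, hG0', sub_zero, sub_zero]
      rw [h2]; exact hquot s 0
    · exact hquot s (s - e)
  -- notation
  set μW := Measure.map W ℙ with hμW
  have hpair : Measurable fun ω => (Ev ω, V ω) := hEv.prodMk hV
  haveI : IsProbabilityMeasure μW := Measure.isProbabilityMeasure_map hW.aemeasurable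
  haveI : IsProbabilityMeasure (Measure.map (fun ω => (Ev ω, V ω)) ℙ) :=
    Measure.isProbabilityMeasure_map hpair.aemeasurable
  have hΘeq : (fun p : ℝ × ℝ => θ p.1 p.2)
      = fun p => if p.2 ≤ p.1 then φ p.2 / G p.2
          else (φ p.2 - φ (p.2 - p.1)) / (G p.2 - G (p.2 - p.1)) :=
    funext fun p => hθ p.1 p.2
  have hΘmeas : Measurable fun p : ℝ × ℝ => θ p.1 p.2 := by
    rw [hΘeq]
    apply Measurable.ite (measurableSet_le measurable_snd measurable_fst)
    · exact (hφmeas.comp measurable_snd).div (hGmeas.comp measurable_snd)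
    · exact ((hφmeas.comp measurable_snd).sub
        (hφmeas.comp (measurable_snd.sub measurable_fst))).div
        ((hGmeas.comp measurable_snd).sub (hGmeas.comp (measurable_snd.sub measurable_fst)))
  -- density function
  set r : ℝ × ℝ → ℝ := fun p => if 0 < p.2 ∧ p.2 < p.1 ∧ p.1 < M then 1 / (M * p.1) else 0
    with hr
  have hrmeas : Measurable r := by
    apply Measurable.ite _ (measurable_const.div (measurable_const.mul measurable_fst))
      measurable_const
    exact ((measurableSet_lt measurable_const measurable_snd).inter
      ((measurableSet_lt measurable_snd measurable_fst).inter
        (measurableSet_lt measurable_fst measurable_const)))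
  -- target integrands
  set t1 : ℝ × ℝ → ℝ := fun p =>
    if 0 < p.2 ∧ p.2 ≤ p.1 ∧ p.1 ≤ M then φ p.2 ^ 2 / (p.1 * G p.2) else 0 with ht1def
  set t2 : ℝ × ℝ → ℝ := fun p =>
    if 0 < p.1 ∧ p.1 < p.2 ∧ p.1 ≤ M then
      (φ p.2 - φ (p.2 - p.1)) ^ 2 / (p.1 * (G p.2 - G (p.2 - p.1))) else 0 with ht2def
  have ht1nonneg : ∀ p, 0 ≤ t1 p := by
    intro p
    simp only [t1]
    split_ifs with h
    · exact div_nonneg (sq_nonneg _) (mul_nonneg (le_trans h.1.le h.2.1) (hGnonneg _))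
    · exact le_rfl
  have ht2nonneg : ∀ p, 0 ≤ t2 p := by
    intro p
    simp only [t2]
    split_ifs with h
    · exact div_nonneg (sq_nonneg _)
        (mul_nonneg h.1.le (sub_nonneg.mpr (hGmono (by linarith [h.2.1]))))
    · exact le_rfl
  have ht1meas : Measurable t1 := by
    apply Measurable.ite
    · exact ((measurableSet_lt measurable_const measurable_snd).inter
        ((measurableSet_le measurable_snd measurable_fst).inter
          (measurableSet_le measurable_fst measurable_const)))
    · exact ((hφmeas.comp measurable_snd).pow_const 2).div
        (measurable_fst.mul (hGmeas.comp measurable_snd))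
    · exact measurable_const
  have ht2meas : Measurable t2 := by
    apply Measurable.ite
    · exact ((measurableSet_lt measurable_const measurable_fst).inter
        ((measurableSet_lt measurable_fst measurable_snd).inter
          (measurableSet_le measurable_fst measurable_const)))
    · exact (((hφmeas.comp measurable_snd).sub
        (hφmeas.comp (measurable_snd.sub measurable_fst))).pow_const 2).div
        (measurable_fst.mul ((hGmeas.comp measurable_snd).sub
          (hGmeas.comp (measurable_snd.sub measurable_fst))))
    · exact measurable_const
  -- joint law of the triple
  have htriple : Measure.map (fun ω => ((Ev ω, V ω), W ω)) ℙ
      = (Measure.map (fun ω => (Ev ω, V ω)) ℙ).prod μW :=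
    (ProbabilityTheory.indepFun_iff_map_prod_eq_prod_map_map hpair.aemeasurable
      hW.aemeasurable).mp hindep
  have hFmeas : Measurable fun q : (ℝ × ℝ) × ℝ =>
      ENNReal.ofReal (θ q.1.1 (q.1.2 + q.2) ^ 2) := by
    apply Measurable.ennreal_ofReal
    exact (hΘmeas.comp ((measurable_fst.fst).prodMk
      ((measurable_fst.snd).add measurable_snd))).pow_const 2
  set L := ∫⁻ ω, ENNReal.ofReal (θ (Ev ω) (V ω + W ω) ^ 2) ∂ℙ with hLdef
  have hL2 : L = ∫⁻ w, ∫⁻ p : ℝ × ℝ, ENNReal.ofReal (θ p.1 (p.2 + w) ^ 2)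
      ∂(Measure.map (fun ω => (Ev ω, V ω)) ℙ) ∂μW := by
    rw [hLdef, ← lintegral_map hFmeas (hpair.prodMk hW), htriple,
      lintegral_prod_symm _ hFmeas.aemeasurable]
  have hinner : ∀ w : ℝ,
      (∫⁻ p : ℝ × ℝ, ENNReal.ofReal (θ p.1 (p.2 + w) ^ 2)
        ∂(Measure.map (fun ω => (Ev ω, V ω)) ℙ))
      = ∫⁻ p : ℝ × ℝ, ENNReal.ofReal (r (p.1, p.2 - w)) * ENNReal.ofReal (θ p.1 p.2 ^ 2) := by
    intro w
    rw [hjoint]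
    have hgw : Measurable fun p : ℝ × ℝ => ENNReal.ofReal (θ p.1 (p.2 + w) ^ 2) := by
      apply Measurable.ennreal_ofReal
      exact (hΘmeas.comp (measurable_fst.prodMk
        (measurable_snd.add measurable_const))).pow_const 2
    rw [lintegral_withDensity_eq_lintegral_mul volume hrmeas.ennreal_ofReal hgw]
    have hmp : MeasurePreserving (fun p : ℝ × ℝ => (p.1, p.2 + w))
        (volume : Measure (ℝ × ℝ)) volume := by
      have h := (MeasurePreserving.id (volume : Measure ℝ)).prod
        (measurePreserving_add_right (volume : Measure ℝ) w)
      rw [← Measure.volume_eq_prod] at h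
      exact h
    have hgm : Measurable fun p : ℝ × ℝ =>
        ENNReal.ofReal (r (p.1, p.2 - w)) * ENNReal.ofReal (θ p.1 p.2 ^ 2) :=
      ((hrmeas.comp (measurable_fst.prodMk
        (measurable_snd.sub measurable_const))).ennreal_ofReal).mul
        ((hΘmeas.pow_const 2).ennreal_ofReal)
    rw [← hmp.lintegral_comp hgm]
    apply lintegral_congr
    intro p
    simp only [Pi.mul_apply, add_sub_cancel_right, hr]
  have hIndW : ∀ p : ℝ × ℝ, (∫⁻ w, ENNReal.ofReal (r (p.1, p.2 - w)) ∂μW)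
      = ENNReal.ofReal (if p.1 < M then 1 / (M * p.1) else 0)
        * μW (Set.Ioo (p.2 - p.1) p.2) := by
    intro p
    have hind : ∀ w, ENNReal.ofReal (r (p.1, p.2 - w))
        = (Set.Ioo (p.2 - p.1) p.2).indicator
            (fun _ => ENNReal.ofReal (if p.1 < M then 1 / (M * p.1) else 0)) w := by
      intro w
      have hre : r (p.1, p.2 - w)
          = if 0 < p.2 - w ∧ p.2 - w < p.1 ∧ p.1 < M then 1 / (M * p.1) else 0 := rfl
      rw [hre]
      by_cases hw : w ∈ Set.Ioo (p.2 - p.1) p.2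
      · rw [Set.indicator_of_mem hw]
        obtain ⟨h1, h2⟩ := hw
        by_cases hM' : p.1 < M
        · rw [if_pos hM', if_pos
            (⟨by linarith, by linarith, hM'⟩ : 0 < p.2 - w ∧ p.2 - w < p.1 ∧ p.1 < M)]
        · rw [if_neg hM', if_neg (fun hcon => hM' hcon.2.2)]
      · rw [Set.indicator_of_notMem hw, if_neg, ENNReal.ofReal_zero]
        simp only [Set.mem_Ioo, not_and, not_lt] at hw
        rintro ⟨h1, h2, _⟩
        have := hw (by linarith : p.2 - p.1 < w)
        linarith
    rw [lintegral_congr hind, lintegral_indicator_const measurableSet_Ioo]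
  have hΔmeas : Measurable fun q : ℝ × (ℝ × ℝ) =>
      ENNReal.ofReal (r (q.2.1, q.2.2 - q.1)) * ENNReal.ofReal (θ q.2.1 q.2.2 ^ 2) :=
    ((hrmeas.comp ((measurable_snd.fst).prodMk
      ((measurable_snd.snd).sub measurable_fst))).ennreal_ofReal).mul
      (((hΘmeas.comp measurable_snd).pow_const 2).ennreal_ofReal)
  have hL3 : L = ∫⁻ p : ℝ × ℝ,
      (ENNReal.ofReal (if p.1 < M then 1 / (M * p.1) else 0)
        * μW (Set.Ioo (p.2 - p.1) p.2)) * ENNReal.ofReal (θ p.1 p.2 ^ 2) := by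
    rw [hL2, lintegral_congr hinner,
      lintegral_lintegral_swap hΔmeas.aemeasurable]
    apply lintegral_congr
    intro p
    have hmw : Measurable fun w : ℝ => ENNReal.ofReal (r (p.1, p.2 - w)) := by
      apply Measurable.ennreal_ofReal
      exact hrmeas.comp (measurable_const.prodMk (measurable_const.sub measurable_id))
    rw [lintegral_mul_const _ hmw, hIndW p]
  -- atoms of μW
  have hAcount : Set.Countable {x : ℝ | 0 < μW {x}} :=
    Measure.countable_meas_pos_of_disjoint_iUnion
      (fun x : ℝ => measurableSet_singleton x)
      (fun x y hxy => by
        simpa [Function.onFun] using Set.disjoint_singleton.mpr hxy)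
  have hae : ∀ᵐ p : ℝ × ℝ ∂volume, p.1 ≠ M ∧ μW {p.2} = 0 := by
    rw [ae_iff]
    apply measure_mono_null
      (t := ({M} ×ˢ (Set.univ : Set ℝ)) ∪ ((Set.univ : Set ℝ) ×ˢ {x : ℝ | 0 < μW {x}}))
    · intro p hp
      simp only [Set.mem_setOf_eq, not_and, ne_eq, not_not] at hp
      by_cases h1 : p.1 = M
      · exact Or.inl ⟨h1, trivial⟩
      · right
        simp only [Set.mem_prod, Set.mem_univ, true_and, Set.mem_setOf_eq]
        exact pos_iff_ne_zero.mpr (hp h1)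
    · apply measure_union_null
      · rw [Measure.volume_eq_prod, Measure.prod_prod]
        simp
      · rw [Measure.volume_eq_prod, Measure.prod_prod, Set.Countable.measure_zero hAcount]
        simp
  -- pointwise identity off the null set
  have hpoint : ∀ p : ℝ × ℝ, p.1 ≠ M → μW {p.2} = 0 →
      (ENNReal.ofReal (if p.1 < M then 1 / (M * p.1) else 0)
        * μW (Set.Ioo (p.2 - p.1) p.2)) * ENNReal.ofReal (θ p.1 p.2 ^ 2)
      = ENNReal.ofReal (1 / M) * (ENNReal.ofReal (t1 p) + ENNReal.ofReal (t2 p)) := by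
    rintro ⟨e, s⟩ heM hatom
    replace heM : e ≠ M := heM
    replace hatom : μW {s} = 0 := hatom
    show (ENNReal.ofReal (if e < M then 1 / (M * e) else 0) * μW (Set.Ioo (s - e) s))
        * ENNReal.ofReal (θ e s ^ 2)
      = ENNReal.ofReal (1 / M) * (ENNReal.ofReal (t1 (e, s)) + ENNReal.ofReal (t2 (e, s)))
    have et1 : t1 (e, s) = if 0 < s ∧ s ≤ e ∧ e ≤ M then φ s ^ 2 / (e * G s) else 0 := rfl
    have et2 : t2 (e, s) = if 0 < e ∧ e < s ∧ e ≤ M then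
        (φ s - φ (s - e)) ^ 2 / (e * (G s - G (s - e))) else 0 := rfl
    have hIoo : μW (Set.Ioo (s - e) s) = ENNReal.ofReal (G s - G (s - e)) := by
      rcases le_or_gt s (s - e) with h | h
      · rw [Set.Ioo_eq_empty (not_lt.mpr h), measure_empty]
        symm
        rw [ENNReal.ofReal_eq_zero]
        have := hGmono h
        linarith
      · have hIocIoo : μW (Set.Ioc (s - e) s) = μW (Set.Ioo (s - e) s) := by
          apply le_antisymm
          · rw [← Set.Ioo_union_right h]
            refine (measure_union_le _ _).trans ?_
            rw [hatom, add_zero]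
          · exact measure_mono Set.Ioo_subset_Ioc_self
        rw [← hIocIoo, ← Set.Iic_sdiff_Iic,
          measure_diff (Set.Iic_subset_Iic.mpr h.le) measurableSet_Iic.nullMeasurableSet
            (by rw [hGcdf]; exact ENNReal.ofReal_ne_top),
          hGcdf, hGcdf, ← ENNReal.ofReal_sub _ (hGnonneg _)]
    rw [hIoo]
    rcases le_or_gt e 0 with he | he
    · have hc0 : ENNReal.ofReal (if e < M then 1 / (M * e) else 0) = 0 := by
        rw [ENNReal.ofReal_eq_zero]
        split_ifs with h
        · have hme : M * e ≤ 0 := mul_nonpos_iff.mpr (Or.inl ⟨hM.le, he⟩)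
          rcases hme.lt_or_eq with h2 | h2
          · exact (div_nonpos_of_nonneg_of_nonpos zero_le_one hme)
          · rw [h2]
            simp
        · exact le_rfl
      rw [hc0, zero_mul, zero_mul]
      have h1 : t1 (e, s) = 0 := by
        rw [et1, if_neg]
        rintro ⟨w1, w2, w3⟩
        linarith
      have h2 : t2 (e, s) = 0 := by
        rw [et2, if_neg]
        rintro ⟨w1, w2, w3⟩
        linarith
      rw [h1, h2]
      simp
    · have hΔG : 0 ≤ G s - G (s - e) := sub_nonneg.mpr (hGmono (by linarith))
      have hcnn : 0 ≤ (if e < M then 1 / (M * e) else 0) := by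
        split_ifs with h
        · positivity
        · exact le_rfl
      rw [← ENNReal.ofReal_mul hcnn, ← ENNReal.ofReal_mul (mul_nonneg hcnn hΔG),
        ← ENNReal.ofReal_add (ht1nonneg _) (ht2nonneg _),
        ← ENNReal.ofReal_mul (by positivity : (0:ℝ) ≤ 1 / M)]
      congr 1
      rw [et1, et2]
      by_cases hM' : e < M
      · rw [if_pos hM']
        have heM2 : e ≤ M := hM'.le
        rw [hθ]
        by_cases hs : s ≤ e
        · rw [if_pos hs]
          rw [if_neg (by rintro ⟨w1, w2, w3⟩; linarith :
            ¬(0 < e ∧ e < s ∧ e ≤ M))]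
          by_cases h0 : 0 < s
          · rw [if_pos (show (0:ℝ) < s ∧ s ≤ e ∧ e ≤ M from ⟨h0, hs, heM2⟩)]
            rw [hG0 (s - e) (by linarith), sub_zero, add_zero]
            exact score_aux_div M e (G s) (φ s)
          · rw [if_neg (by rintro ⟨w1, w2, w3⟩; exact h0 w1)]
            rw [hG0 s (not_lt.mp h0), hG0 (s - e) (by linarith)]
            simp
        · push_neg at hs
          rw [if_neg (not_le.mpr hs)]
          rw [if_neg (by rintro ⟨w1, w2, w3⟩; linarith)]
          rw [if_pos (show (0:ℝ) < e ∧ e < s ∧ e ≤ M from ⟨he, hs, heM2⟩), zero_add]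
          exact score_aux_div M e (G s - G (s - e)) (φ s - φ (s - e))
      · rw [if_neg hM']
        have hM2 : M < e := lt_of_le_of_ne (not_lt.mp hM') (Ne.symm heM)
        rw [if_neg (by rintro ⟨w1, w2, w3⟩; linarith),
          if_neg (by rintro ⟨w1, w2, w3⟩; linarith)]
        simp
  set L1 := ∫⁻ p : ℝ × ℝ, ENNReal.ofReal (t1 p) with hL1def
  set L2 := ∫⁻ p : ℝ × ℝ, ENNReal.ofReal (t2 p) with hL2def
  have hL4 : L = ENNReal.ofReal (1 / M) * (L1 + L2) := by
    rw [hL3, lintegral_congr_ae (hae.mono fun p hp => hpoint p hp.1 hp.2),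
      lintegral_const_mul _ (f := fun p => ENNReal.ofReal (t1 p) + ENNReal.ofReal (t2 p)) ((ht1meas.ennreal_ofReal).add (ht2meas.ennreal_ofReal)),
      lintegral_add_left ht1meas.ennreal_ofReal]
  have hLtop : L ≠ ⊤ := by
    have hle : L ≤ ENNReal.ofReal (C ^ 2) := by
      rw [hLdef]
      calc ∫⁻ ω, ENNReal.ofReal (θ (Ev ω) (V ω + W ω) ^ 2) ∂ℙ
          ≤ ∫⁻ _, ENNReal.ofReal (C ^ 2) ∂ℙ := by
            apply lintegral_mono
            intro ω
            apply ENNReal.ofReal_le_ofReal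
            have h := hθbound (Ev ω) (V ω + W ω)
            calc θ (Ev ω) (V ω + W ω) ^ 2
                = |θ (Ev ω) (V ω + W ω)| ^ 2 := (sq_abs _).symm
              _ ≤ C ^ 2 := pow_le_pow_left₀ (abs_nonneg _) h 2
        _ = ENNReal.ofReal (C ^ 2) := by simp [lintegral_const]
    exact ne_top_of_le_ne_top ENNReal.ofReal_ne_top hle
  have hsumtop : L1 + L2 ≠ ⊤ := by
    intro hcon
    apply hLtop
    rw [hL4, hcon, ENNReal.mul_top]
    rw [ne_eq, ENNReal.ofReal_eq_zero, not_le]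
    positivity
  have hL1top : L1 ≠ ⊤ := ne_top_of_le_ne_top hsumtop le_self_add
  have hL2top : L2 ≠ ⊤ := ne_top_of_le_ne_top hsumtop le_add_self
  have hInt0 : ∫ ω, θ (Ev ω) (V ω + W ω) ^ 2 ∂ℙ = L.toReal := by
    have hm0 : AEStronglyMeasurable (fun ω => θ (Ev ω) (V ω + W ω) ^ 2) ℙ := by
      apply Measurable.aestronglyMeasurable
      exact (hΘmeas.comp (hEv.prodMk (hV.add hW))).pow_const 2
    rw [integral_eq_lintegral_of_nonneg_ae
      (Filter.Eventually.of_forall fun ω => sq_nonneg _) hm0, ← hLdef]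
  have hInt1 : ∫ p : ℝ × ℝ, t1 p = L1.toReal := by
    rw [integral_eq_lintegral_of_nonneg_ae (Filter.Eventually.of_forall ht1nonneg)
      ht1meas.aestronglyMeasurable, ← hL1def]
  have hInt2 : ∫ p : ℝ × ℝ, t2 p = L2.toReal := by
    rw [integral_eq_lintegral_of_nonneg_ae (Filter.Eventually.of_forall ht2nonneg)
      ht2meas.aestronglyMeasurable, ← hL2def]
  have hfinal : L.toReal = 1 / M * L1.toReal + 1 / M * L2.toReal := by
    rw [hL4, ENNReal.toReal_mul, ENNReal.toReal_add hL1top hL2top,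
      ENNReal.toReal_ofReal (by positivity : (0:ℝ) ≤ 1 / M)]
    ring
  show ∫ ω, θ (Ev ω) (V ω + W ω) ^ 2 ∂ℙ = 1 / M * (∫ p : ℝ × ℝ, t1 p) + 1 / M * (∫ p : ℝ × ℝ, t2 p)
  rw [hInt0, hInt1, hInt2, hfinal]
end

section
/- Conditional expectation of the score given the incubation time: in the model E ~ Uniform[0,M], V|E ~ Uniform[0,E], S = V + W, Δ = 1_{S≤E}, one has for w ∈ [0,M): E[θ(E,S,Δ) | W = w] = ∫_{e∈[w,M]} (1/(Me))·∫_{s∈[w,e]} φ(s)/G(s) ds de + ∫_{e∈[w,M]} (1/(Me))·∫_{s∈[e,w+e]} (φ(s)−φ(s−e))/(G(s)−G(s−e)) ds de + ∫_{e∈(0,w]} (1/(Me))·∫_{s∈[w,w+e]} (φ(s)−φ(s−e))/(G(s)−G(s−e)) ds de. -/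
open MeasureTheory intervalIntegral

private lemma abs_div_le_of_abs_le {x y K : ℝ} (hK : 0 ≤ K) (h : |x| ≤ K * |y|) :
    |x / y| ≤ K := by
  rcases eq_or_ne y 0 with hy | hy
  · simp [hy, hK]
  · rw [abs_div, div_le_iff₀ (abs_pos.mpr hy)]
    exact h

/-- Conditional expectation of the score given the incubation time `W = w`:
integrating `θ(E, w + V, 1_{w+V ≤ E})` against the joint density of `(E,V)`
(`E ~ Uniform[0,M]`, `V | E ~ Uniform[0,E]`) gives the three-term formula. -/
theorem score_conditional_expectation_given_W
    (M : ℝ) (hM : 0 < M) (w : ℝ) (hw0 : 0 ≤ w) (hwM : w < M)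
    (G : ℝ → ℝ) (hGmono : Monotone G) (hGcont : Continuous G)
    (hG0 : ∀ s : ℝ, s ≤ 0 → G s = 0) (hG1 : ∀ s : ℝ, G s ≤ 1)
    (φ : ℝ → ℝ) (hφcont : Continuous φ) (hφ0 : φ 0 = 0)
    (C : ℝ) (hφAC : ∀ s t : ℝ, |φ s - φ t| ≤ C * |G s - G t|)
    (θ : ℝ → ℝ → ℝ)
    (hθ : ∀ e s : ℝ, θ e s =
      if s ≤ e then φ s / G s else (φ s - φ (s - e)) / (G s - G (s - e))) :
    (∫ p : ℝ × ℝ,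
        if 0 < p.2 ∧ p.2 < p.1 ∧ p.1 < M then θ p.1 (w + p.2) / (M * p.1) else 0) =
      (∫ e in w..M, (1 / (M * e)) * ∫ s in w..e, φ s / G s)
      + (∫ e in w..M, (1 / (M * e)) *
          ∫ s in e..(w + e), (φ s - φ (s - e)) / (G s - G (s - e)))
      + (∫ e in (0 : ℝ)..w, (1 / (M * e)) *
          ∫ s in w..(w + e), (φ s - φ (s - e)) / (G s - G (s - e))) := by
  have hG00 : G 0 = 0 := hG0 0 le_rfl
  set K := |C| with hKdef
  have hKnn : (0:ℝ) ≤ K := abs_nonneg C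
  set F : ℝ → ℝ → ℝ :=
    fun e s => if s ≤ e then φ s / G s else (φ s - φ (s - e)) / (G s - G (s - e)) with hF
  -- bounds
  have hratio : ∀ s t : ℝ, |(φ s - φ t) / (G s - G t)| ≤ K := by
    intro s t
    apply abs_div_le_of_abs_le hKnn
    calc |φ s - φ t| ≤ C * |G s - G t| := hφAC s t
      _ ≤ K * |G s - G t| := mul_le_mul_of_nonneg_right (le_abs_self C) (abs_nonneg _)
  have hψbd : ∀ s : ℝ, |φ s / G s| ≤ K := by
    intro s
    have := hratio s 0
    simpa [hφ0, hG00] using this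
  have hFbd : ∀ e s : ℝ, |F e s| ≤ K := by
    intro e s
    simp only [hF]
    split
    · exact hψbd s
    · exact hratio s (s - e)
  -- measurability
  have hGm := hGcont.measurable
  have hφm := hφcont.measurable
  have hFmeas : Measurable (fun p : ℝ × ℝ => F p.1 p.2) := by
    apply Measurable.ite (measurableSet_le measurable_snd measurable_fst)
    · exact (hφm.comp measurable_snd).div (hGm.comp measurable_snd)
    · exact ((hφm.comp measurable_snd).sub
        (hφm.comp (measurable_snd.sub measurable_fst))).div
        ((hGm.comp measurable_snd).sub (hGm.comp (measurable_snd.sub measurable_fst)))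
  have hFmeas1 : ∀ e : ℝ, Measurable (F e) := fun e =>
    hFmeas.comp (measurable_const.prodMk measurable_id)
  have hRmeas : ∀ e : ℝ, Measurable (fun s => (φ s - φ (s - e)) / (G s - G (s - e))) := by
    intro e
    exact (hφm.sub (hφm.comp (measurable_id.sub measurable_const))).div
      (hGm.sub (hGm.comp (measurable_id.sub measurable_const)))
  -- generic interval integrability of bounded measurable functions
  have hII : ∀ (f : ℝ → ℝ), Measurable f → (∀ s, |f s| ≤ K) →
      ∀ a b : ℝ, IntervalIntegrable f volume a b := by
    intro f hf hb a b
    rw [intervalIntegrable_iff]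
    apply Measure.integrableOn_of_bounded (M := K) ?_ hf.aestronglyMeasurable
    · exact Filter.Eventually.of_forall fun s => by simpa [Real.norm_eq_abs] using hb s
    · rw [Set.uIoc]
      exact measure_Ioc_lt_top.ne
  have hFe : ∀ e a b : ℝ, IntervalIntegrable (F e) volume a b :=
    fun e => hII (F e) (hFmeas1 e) (hFbd e)
  have hψe : ∀ a b : ℝ, IntervalIntegrable (fun s => φ s / G s) volume a b :=
    hII _ (hφm.div hGm) hψbd
  -- the integrand on the product space
  set g : ℝ × ℝ → ℝ := fun p =>
    if 0 < p.2 ∧ p.2 < p.1 ∧ p.1 < M then F p.1 (w + p.2) / (M * p.1) else 0 with hg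
  have hLHS : (∫ p : ℝ × ℝ,
      if 0 < p.2 ∧ p.2 < p.1 ∧ p.1 < M then θ p.1 (w + p.2) / (M * p.1) else 0)
      = ∫ p : ℝ × ℝ, g p := by
    congr 1
    funext p
    simp only [hg, hθ, hF]
  have hSmeas : MeasurableSet {p : ℝ × ℝ | 0 < p.2 ∧ p.2 < p.1 ∧ p.1 < M} := by
    refine (measurableSet_lt measurable_const measurable_snd).inter
      ((measurableSet_lt measurable_snd measurable_fst).inter
        (measurableSet_lt measurable_fst measurable_const))
  have hgmeas : Measurable g := by
    apply Measurable.ite hSmeas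
    · exact (hFmeas.comp (measurable_fst.prodMk
        (measurable_const.add measurable_snd))).div (measurable_const.mul measurable_fst)
    · exact measurable_const
  -- sections of g
  have hsec : ∀ e : ℝ, e < M → (fun v => g (e, v))
      = (Set.Ioo 0 e).indicator (fun v => F e (w + v) / (M * e)) := by
    intro e he
    funext v
    by_cases h : 0 < v ∧ v < e
    · rw [Set.indicator_of_mem (Set.mem_Ioo.mpr h)]
      simp only [hg]
      rw [if_pos ⟨h.1, h.2, he⟩]
    · rw [Set.indicator_of_notMem (by simpa [Set.mem_Ioo] using h)]
      simp only [hg]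
      rw [if_neg (by tauto)]
  have hsec' : ∀ e : ℝ, M ≤ e → (fun v => g (e, v)) = fun _ => (0:ℝ) := by
    intro e he
    funext v
    simp only [hg]
    exact if_neg fun h => absurd h.2.2 (not_lt.mpr he)
  have hseczero : ∀ e : ℝ, e ≤ 0 → (fun v => g (e, v)) = fun _ => (0:ℝ) := by
    intro e he
    funext v
    simp only [hg]
    exact if_neg fun h => absurd (h.1.trans h.2.1) (not_lt.mpr he)
  have hsecInt : ∀ e : ℝ, Integrable (fun v => g (e, v)) := by
    intro e
    rcases le_or_gt M e with he | he
    · rw [hsec' e he]; exact integrable_zero _ _ _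
    rcases le_or_gt e 0 with he0 | he0
    · rw [hseczero e he0]; exact integrable_zero _ _ _
    · rw [hsec e he, integrable_indicator_iff measurableSet_Ioo]
      have hMe : 0 < M * e := by positivity
      apply Measure.integrableOn_of_bounded (M := K / (M * e)) measure_Ioo_lt_top.ne
        (((hFmeas1 e).comp (measurable_const.add measurable_id)).div_const
          (M * e)).aestronglyMeasurable
      refine Filter.Eventually.of_forall fun v => ?_
      rw [Real.norm_eq_abs, abs_div, abs_of_pos hMe]
      gcongr
      exact hFbd e (w + v)
  -- bound on the integral of the norms of sections
  have hnorm_le : ∀ e : ℝ, (∫ v, ‖g (e, v)‖) ≤ (Set.Ioo (0:ℝ) M).indicator (fun _ => K / M) e := by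
    intro e
    have hind0 : (0:ℝ) ≤ (Set.Ioo (0:ℝ) M).indicator (fun _ => K / M) e :=
      Set.indicator_nonneg (fun _ _ => by positivity) e
    rcases le_or_gt M e with he | he
    · have hz : ∀ v, g (e, v) = 0 := fun v => congrFun (hsec' e he) v
      simpa [hz] using hind0
    rcases le_or_gt e 0 with he0 | he0
    · have hz : ∀ v, g (e, v) = 0 := fun v => congrFun (hseczero e he0) v
      simpa [hz] using hind0
    have hmem : e ∈ Set.Ioo (0:ℝ) M := ⟨he0, he⟩
    rw [Set.indicator_of_mem hmem]
    have hMe : 0 < M * e := by positivity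
    have hint2 : Integrable ((Set.Ioo (0:ℝ) e).indicator (fun _ => K / (M * e))) :=
      (integrable_indicator_iff measurableSet_Ioo).mpr
        ((integrableOn_const_iff).mpr (Or.inr measure_Ioo_lt_top))
    calc (∫ v, ‖g (e, v)‖)
        ≤ ∫ v, (Set.Ioo (0:ℝ) e).indicator (fun _ => K / (M * e)) v := by
          apply integral_mono (hsecInt e).norm hint2
          intro v
          show ‖g (e, v)‖ ≤ _
          rw [congrFun (hsec e he) v]
          by_cases hv : v ∈ Set.Ioo (0:ℝ) e
          · rw [Set.indicator_of_mem hv, Set.indicator_of_mem hv, Real.norm_eq_abs,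
              abs_div, abs_of_pos hMe]
            gcongr
            exact hFbd e (w + v)
          · rw [Set.indicator_of_notMem hv, Set.indicator_of_notMem hv]
            simp
      _ = (volume (Set.Ioo (0:ℝ) e)).toReal • (K / (M * e)) :=
          integral_indicator_const _ measurableSet_Ioo
      _ = K / M := by
          rw [Real.volume_Ioo, sub_zero, ENNReal.toReal_ofReal he0.le, smul_eq_mul]
          field_simp
  -- integrability of g on the product
  have hvol : (volume : Measure (ℝ × ℝ)) = (volume : Measure ℝ).prod volume :=
    MeasureTheory.Measure.volume_eq_prod ℝ ℝ
  have hbdInt : Integrable ((Set.Ioo (0:ℝ) M).indicator (fun _ => K / M)) :=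
    (integrable_indicator_iff measurableSet_Ioo).mpr
      ((integrableOn_const_iff).mpr (Or.inr measure_Ioo_lt_top))
  have hgint : Integrable g ((volume : Measure ℝ).prod volume) := by
    rw [integrable_prod_iff hgmeas.aestronglyMeasurable]
    constructor
    · exact Filter.Eventually.of_forall hsecInt
    · apply hbdInt.mono' hgmeas.aestronglyMeasurable.norm.integral_prod_right'
      refine Filter.Eventually.of_forall fun e => ?_
      rw [Real.norm_eq_abs, abs_of_nonneg (integral_nonneg fun v => norm_nonneg _)]
      exact hnorm_le e
  -- inner integral and the function H
  set H : ℝ → ℝ := fun e => (1 / (M * e)) * ∫ s in w..(w + e), F e s with hH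
  have hinner : ∀ e : ℝ, (∫ v, g (e, v)) = (Set.Ioo (0:ℝ) M).indicator H e := by
    intro e
    rcases le_or_gt M e with he | he
    · rw [Set.indicator_of_notMem (by simp [Set.mem_Ioo]; intro _; linarith)]
      have hz : ∀ v, g (e, v) = 0 := fun v => congrFun (hsec' e he) v
      simp [hz]
    rcases le_or_gt e 0 with he0 | he0
    · rw [Set.indicator_of_notMem (by simp [Set.mem_Ioo]; intro h; linarith)]
      have hz : ∀ v, g (e, v) = 0 := fun v => congrFun (hseczero e he0) v
      simp [hz]
    have hMe : (0:ℝ) < M * e := by positivity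
    rw [Set.indicator_of_mem (Set.mem_Ioo.mpr ⟨he0, he⟩), hsec e he, MeasureTheory.integral_indicator measurableSet_Ioo,
      ← integral_Ioc_eq_integral_Ioo, ← intervalIntegral.integral_of_le he0.le,
      intervalIntegral.integral_div, intervalIntegral.integral_comp_add_left (F e) w, add_zero]
    simp only [hH]
    ring
  -- integrability of H on (0, M)
  have hIint : Integrable (fun e => ∫ v, g (e, v)) := hgint.integral_prod_left
  have hIint' : Integrable ((Set.Ioo (0:ℝ) M).indicator H) := by
    rwa [funext hinner] at hIint
  have hHon : IntegrableOn H (Set.Ioo (0:ℝ) M) :=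
    (integrable_indicator_iff measurableSet_Ioo).mp hIint'
  have hHint : IntervalIntegrable H volume 0 M :=
    (intervalIntegrable_iff_integrableOn_Ioo_of_le hM.le).mpr hHon
  have h0w : IntervalIntegrable H volume 0 w :=
    hHint.mono_set (Set.uIcc_subset_uIcc Set.left_mem_uIcc
      (by rw [Set.uIcc_of_le hM.le]; exact ⟨hw0, hwM.le⟩))
  have hwMint : IntervalIntegrable H volume w M :=
    hHint.mono_set (Set.uIcc_subset_uIcc
      (by rw [Set.uIcc_of_le hM.le]; exact ⟨hw0, hwM.le⟩) Set.right_mem_uIcc)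
  -- identification of H on the two regions
  have hsecond : ∀ e a b : ℝ, a ≤ b → e ≤ a →
      (∫ s in a..b, F e s) = ∫ s in a..b, (φ s - φ (s - e)) / (G s - G (s - e)) := by
    intro e a b hab hea
    rw [intervalIntegral.integral_of_le hab, intervalIntegral.integral_of_le hab]
    apply setIntegral_congr_fun measurableSet_Ioc
    intro s hs
    simp only [hF]
    rw [if_neg (not_le.mpr (lt_of_le_of_lt hea hs.1))]
  have hfirst : ∀ e : ℝ, w ≤ e → (∫ s in w..e, F e s) = ∫ s in w..e, φ s / G s := by
    intro e hwe
    apply intervalIntegral.integral_congr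
    intro s hs
    rw [Set.uIcc_of_le hwe] at hs
    simp only [hF]
    rw [if_pos hs.2]
  set A : ℝ → ℝ := fun e => (1 / (M * e)) * ∫ s in w..e, φ s / G s with hA
  set B : ℝ → ℝ := fun e =>
    (1 / (M * e)) * ∫ s in e..(w + e), (φ s - φ (s - e)) / (G s - G (s - e)) with hB
  have hHsplit : ∀ e : ℝ, w ≤ e → H e = A e + B e := by
    intro e hwe
    have h1 : (∫ s in w..(w + e), F e s) = (∫ s in w..e, F e s) + ∫ s in e..(w + e), F e s :=
      (intervalIntegral.integral_add_adjacent_intervals (hFe e w e) (hFe e e (w + e))).symm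
    simp only [hH, hA, hB]
    rw [h1, hfirst e hwe, hsecond e e (w + e) (by linarith) le_rfl, mul_add]
  -- the low region
  have hterm3 : (∫ e in (0:ℝ)..w, H e) = ∫ e in (0:ℝ)..w,
      (1 / (M * e)) * ∫ s in w..(w + e), (φ s - φ (s - e)) / (G s - G (s - e)) := by
    apply intervalIntegral.integral_congr
    intro e he
    rw [Set.uIcc_of_le hw0] at he
    simp only [hH]
    rw [hsecond e w (w + e) (by linarith [he.1]) he.2]
  -- integrability of A and B on [w, M]
  have hprim : Continuous fun e => ∫ s in w..e, φ s / G s :=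
    intervalIntegral.continuous_primitive (fun a b => hψe a b) w
  have hAmeas : Measurable A :=
    (measurable_const.div (measurable_const.mul measurable_id)).mul hprim.measurable
  have hAon : IntegrableOn A (Set.Ioc w M) := by
    apply Measure.integrableOn_of_bounded (M := K / M) measure_Ioc_lt_top.ne
      hAmeas.aestronglyMeasurable
    rw [ae_restrict_iff' measurableSet_Ioc]
    refine Filter.Eventually.of_forall fun e he => ?_
    have he0 : 0 < e := lt_of_le_of_lt hw0 he.1
    have hMe : (0:ℝ) < M * e := by positivity
    have h1 : ‖∫ s in w..e, φ s / G s‖ ≤ K * |e - w| :=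
      intervalIntegral.norm_integral_le_of_norm_le_const fun s _ => by
        rw [Real.norm_eq_abs]; exact hψbd s
    rw [Real.norm_eq_abs] at h1 ⊢
    simp only [hA]
    rw [abs_mul, abs_div, abs_one, abs_of_pos hMe]
    calc 1 / (M * e) * |∫ s in w..e, φ s / G s| ≤ 1 / (M * e) * (K * |e - w|) := by
          gcongr
      _ ≤ 1 / (M * e) * (K * e) := by
          gcongr
          rw [abs_of_nonneg (by linarith [he.1] : (0:ℝ) ≤ e - w)]
          linarith
      _ = K / M := by field_simp
  have hAint : IntervalIntegrable A volume w M :=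
    (intervalIntegrable_iff_integrableOn_Ioc_of_le hwM.le).mpr hAon
  have hHonwM : IntegrableOn H (Set.Ioc w M) :=
    (intervalIntegrable_iff_integrableOn_Ioc_of_le hwM.le).mp hwMint
  have hBon : IntegrableOn B (Set.Ioc w M) := by
    apply IntegrableOn.congr_fun (hHonwM.sub hAon) ?_ measurableSet_Ioc
    intro e he
    have := hHsplit e he.1.le
    simp only [Pi.sub_apply]
    linarith [this]
  have hBint : IntervalIntegrable B volume w M :=
    (intervalIntegrable_iff_integrableOn_Ioc_of_le hwM.le).mpr hBon
  have hterm12 : (∫ e in w..M, H e) = (∫ e in w..M, A e) + ∫ e in w..M, B e := by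
    rw [← intervalIntegral.integral_add hAint hBint]
    apply intervalIntegral.integral_congr
    intro e he
    rw [Set.uIcc_of_le hwM.le] at he
    exact hHsplit e he.1
  -- assemble
  calc (∫ p : ℝ × ℝ,
        if 0 < p.2 ∧ p.2 < p.1 ∧ p.1 < M then θ p.1 (w + p.2) / (M * p.1) else 0)
      = ∫ p : ℝ × ℝ, g p := hLHS
    _ = ∫ e : ℝ, ∫ v : ℝ, g (e, v) := by rw [hvol]; exact integral_prod g hgint
    _ = ∫ e : ℝ, (Set.Ioo (0:ℝ) M).indicator H e := integral_congr_ae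
        (Filter.Eventually.of_forall hinner)
    _ = ∫ e in Set.Ioo (0:ℝ) M, H e := integral_indicator measurableSet_Ioo
    _ = ∫ e in Set.Ioc (0:ℝ) M, H e := integral_Ioc_eq_integral_Ioo.symm
    _ = ∫ e in (0:ℝ)..M, H e := (intervalIntegral.integral_of_le hM.le).symm
    _ = (∫ e in (0:ℝ)..w, H e) + ∫ e in w..M, H e :=
        (intervalIntegral.integral_add_adjacent_intervals h0w hwMint).symm
    _ = _ := by
        rw [hterm12, hterm3]
        simp only [hA, hB]
        ring
end

section
/- Self-consistency characterization of the discrete MLE: a probability vector p̂ with support J = {j : p̂_j > 0} maximizes ℓ(p) = (1/n)Σ_{i=1}^n log(Σ_{j∈A_i} p_j) over the simplex if and only if (1/n)·Σ_{i=1}^n 1_{j∈A_i}/(Σ_{k∈A_i} p̂_k) ≤ 1 for all j, with equality for j ∈ J. -/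
open Filter Set

lemma deriv_le_zero_of_right_max (f : ℝ → ℝ) (f' ε : ℝ) (hε : 0 < ε)
    (hd : HasDerivAt f f' 0) (h : ∀ t ∈ Set.Ioo (0:ℝ) ε, f t ≤ f 0) : f' ≤ 0 := by
  have h1 : Tendsto (slope f 0) (nhdsWithin 0 (Set.Ioi 0)) (nhds f') :=
    (hasDerivAt_iff_tendsto_slope.mp hd).mono_left
      (nhdsWithin_mono _ (fun x hx => ne_of_gt hx))
  refine le_of_tendsto h1 ?_
  filter_upwards [Ioo_mem_nhdsGT_of_mem ⟨le_refl 0, hε⟩] with t ht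
  rw [slope_def_field]
  have h0 := h t ht
  have h2 : (0:ℝ) < t - 0 := by linarith [ht.1]
  exact div_nonpos_of_nonpos_of_nonneg (by linarith) (by linarith)

lemma hasDerivAt_logsum (n : ℕ) (a b : Fin n → ℝ) (ha : ∀ i, a i ≠ 0) :
    HasDerivAt (fun t => (1/(n:ℝ)) * ∑ i, Real.log (a i + t * b i))
      ((1/(n:ℝ)) * ∑ i, b i / a i) 0 := by
  refine HasDerivAt.const_mul _ (HasDerivAt.fun_sum fun i _ => ?_)
  have h1 : HasDerivAt (fun t : ℝ => a i + t * b i) (b i) 0 := by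
    simpa using (hasDerivAt_const (0:ℝ) (a i)).fun_add ((hasDerivAt_id (0:ℝ)).mul_const (b i))
  have := h1.log (by simpa using ha i)
  simpa using this

lemma key_dir (m n : ℕ) (A : Fin n → Finset (Fin m))
    (phat : Fin m → ℝ) (hpos : ∀ i, 0 < ∑ k ∈ A i, phat k)
    (ℓ : (Fin m → ℝ) → ℝ)
    (hℓ : ∀ p, ℓ p = (1 / (n : ℝ)) * ∑ i, Real.log (∑ j ∈ A i, p j))
    (hmax : ∀ q : Fin m → ℝ, (∀ j, 0 ≤ q j) → ∑ j, q j = 1 →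
        (∀ i, 0 < ∑ k ∈ A i, q k) → ℓ q ≤ ℓ phat)
    (hsum : ∑ j, phat j = 1)
    (v : Fin m → ℝ) (hv : ∑ k, v k = 0) (ε : ℝ) (hε : 0 < ε)
    (hfeas : ∀ t ∈ Set.Ioo (0:ℝ) ε, (∀ k, 0 ≤ phat k + t * v k) ∧
        ∀ i, 0 < ∑ k ∈ A i, (phat k + t * v k)) :
    (1/(n:ℝ)) * ∑ i, (∑ k ∈ A i, v k) / (∑ k ∈ A i, phat k) ≤ 0 := by
  have hane : ∀ i, (∑ k ∈ A i, phat k) ≠ 0 := fun i => ne_of_gt (hpos i)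
  have hd := hasDerivAt_logsum n (fun i => ∑ k ∈ A i, phat k) (fun i => ∑ k ∈ A i, v k) hane
  refine deriv_le_zero_of_right_max _ _ ε hε hd ?_
  intro t ht
  have hmass : ∀ i, ∑ k ∈ A i, (phat k + t * v k)
      = (∑ k ∈ A i, phat k) + t * (∑ k ∈ A i, v k) := by
    intro i
    rw [Finset.sum_add_distrib, ← Finset.mul_sum]
  have h0 : (1/(n:ℝ)) * ∑ i, Real.log ((∑ k ∈ A i, phat k) + 0 * (∑ k ∈ A i, v k))
      = ℓ phat := by rw [hℓ phat]; simp
  have h1 : (1/(n:ℝ)) * ∑ i, Real.log ((∑ k ∈ A i, phat k) + t * (∑ k ∈ A i, v k))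
      = ℓ (fun k => phat k + t * v k) := by
    rw [hℓ]
    congr 1
    exact Finset.sum_congr rfl fun i _ => by rw [← hmass i]
  calc (fun t => (1/(n:ℝ)) * ∑ i, Real.log
          ((∑ k ∈ A i, phat k) + t * (∑ k ∈ A i, v k))) t
      = ℓ (fun k => phat k + t * v k) := h1
    _ ≤ ℓ phat := by
        refine hmax _ (hfeas t ht).1 ?_ ?_
        · rw [Finset.sum_add_distrib, ← Finset.mul_sum, hsum, hv]; ring
        · intro i
          rw [hmass i, ← hmass i]
          exact (hfeas t ht).2 i
    _ = _ := h0.symm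


/-- Self-consistency (KKT) characterization of the discrete MLE: a probability
vector `p̂` maximizes `ℓ(p) = (1/n) ∑ᵢ log (∑_{j ∈ Aᵢ} p_j)` over the simplex
(restricted to vectors giving every `Aᵢ` positive mass, where the likelihood
is finite) iff the self-consistency conditions hold. -/
theorem discrete_mle_self_consistency
    (m n : ℕ) (hm : 0 < m) (hn : 0 < n)
    (A : Fin n → Finset (Fin m)) (hA : ∀ i, (A i).Nonempty)
    (ℓ : (Fin m → ℝ) → ℝ)
    (hℓ : ∀ p : Fin m → ℝ, ℓ p = (1 / (n : ℝ)) * ∑ i, Real.log (∑ j ∈ A i, p j))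
    (phat : Fin m → ℝ) (hphat : ∀ j, 0 ≤ phat j) (hsum : ∑ j, phat j = 1)
    (hpos : ∀ i, 0 < ∑ k ∈ A i, phat k) :
    (∀ q : Fin m → ℝ, (∀ j, 0 ≤ q j) → ∑ j, q j = 1 →
        (∀ i, 0 < ∑ k ∈ A i, q k) → ℓ q ≤ ℓ phat) ↔
      (∀ j : Fin m,
        (1 / (n : ℝ)) * (∑ i, if j ∈ A i then (∑ k ∈ A i, phat k)⁻¹ else 0) ≤ 1 ∧
        (0 < phat j →
          (1 / (n : ℝ)) * (∑ i, if j ∈ A i then (∑ k ∈ A i, phat k)⁻¹ else 0) = 1)) := by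
  have hn' : (0:ℝ) < n := Nat.cast_pos.mpr hn
  have hinvn : (1/(n:ℝ)) * (n:ℝ) = 1 := by field_simp
  constructor
  · intro hmax j
    have hle : (1/(n:ℝ)) * (∑ i, if j ∈ A i then (∑ k ∈ A i, phat k)⁻¹ else 0) ≤ 1 := by
      have key := key_dir m n A phat hpos ℓ hℓ hmax hsum
        (fun k => (if k = j then 1 else 0) - phat k)
        (by rw [Finset.sum_sub_distrib, hsum, Finset.sum_ite_eq' Finset.univ j (fun _ => (1:ℝ))]
            simp) 1 one_pos ?_
      · have e : ∑ i, (∑ k ∈ A i, ((if k = j then (1:ℝ) else 0) - phat k)) / (∑ k ∈ A i, phat k)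
            = (∑ i, if j ∈ A i then (∑ k ∈ A i, phat k)⁻¹ else 0) - n := by
          have step : ∀ i : Fin n,
              (∑ k ∈ A i, ((if k = j then (1:ℝ) else 0) - phat k)) / (∑ k ∈ A i, phat k)
              = (if j ∈ A i then (∑ k ∈ A i, phat k)⁻¹ else 0) - 1 := by
            intro i
            have hSne : (∑ k ∈ A i, phat k) ≠ 0 := ne_of_gt (hpos i)
            rw [Finset.sum_sub_distrib, Finset.sum_ite_eq' (A i) j (fun _ => (1:ℝ))]
            split_ifs with h
            · rw [sub_div, div_self hSne, one_div]
            · rw [zero_sub, neg_div, div_self hSne]; norm_num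
          rw [Finset.sum_congr rfl fun i _ => step i, Finset.sum_sub_distrib]
          simp
        have key2 : (1/(n:ℝ)) *
            ((∑ i, if j ∈ A i then (∑ k ∈ A i, phat k)⁻¹ else 0) - n) ≤ 0 := by
          rw [← e]; exact key
        rw [mul_sub, hinvn] at key2
        linarith
      · intro t ht
        constructor
        · intro k
          have heq : phat k + t * ((if k = j then (1:ℝ) else 0) - phat k)
              = (1-t) * phat k + t * (if k = j then 1 else 0) := by ring
          rw [heq]
          have h1 : (0:ℝ) ≤ (1-t) * phat k :=
            mul_nonneg (by linarith [ht.2]) (hphat k)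
          have h2 : (0:ℝ) ≤ t * (if k = j then (1:ℝ) else 0) :=
            mul_nonneg ht.1.le (by split_ifs <;> norm_num)
          linarith
        · intro i
          have hmass : ∑ k ∈ A i, (phat k + t * ((if k = j then (1:ℝ) else 0) - phat k))
              = (1-t) * (∑ k ∈ A i, phat k) + t * (if j ∈ A i then 1 else 0) := by
            rw [Finset.sum_add_distrib, ← Finset.mul_sum, Finset.sum_sub_distrib,
              Finset.sum_ite_eq' (A i) j (fun _ => (1:ℝ))]
            ring
          rw [hmass]
          have h1 : (0:ℝ) < (1-t) * (∑ k ∈ A i, phat k) :=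
            mul_pos (by linarith [ht.2]) (hpos i)
          have h2 : (0:ℝ) ≤ t * (if j ∈ A i then (1:ℝ) else 0) :=
            mul_nonneg ht.1.le (by split_ifs <;> norm_num)
          linarith
    refine ⟨hle, ?_⟩
    intro hpj
    have key := key_dir m n A phat hpos ℓ hℓ hmax hsum
      (fun k => phat k - (if k = j then 1 else 0))
      (by rw [Finset.sum_sub_distrib, hsum, Finset.sum_ite_eq' Finset.univ j (fun _ => (1:ℝ))]
          simp) (phat j) hpj ?_
    · have e : ∑ i, (∑ k ∈ A i, (phat k - (if k = j then (1:ℝ) else 0))) / (∑ k ∈ A i, phat k)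
          = (n:ℝ) - (∑ i, if j ∈ A i then (∑ k ∈ A i, phat k)⁻¹ else 0) := by
        have step : ∀ i : Fin n,
            (∑ k ∈ A i, (phat k - (if k = j then (1:ℝ) else 0))) / (∑ k ∈ A i, phat k)
            = 1 - (if j ∈ A i then (∑ k ∈ A i, phat k)⁻¹ else 0) := by
          intro i
          have hSne : (∑ k ∈ A i, phat k) ≠ 0 := ne_of_gt (hpos i)
          rw [Finset.sum_sub_distrib, Finset.sum_ite_eq' (A i) j (fun _ => (1:ℝ))]
          split_ifs with h
          · rw [sub_div, div_self hSne, one_div]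
          · rw [sub_zero, div_self hSne]; ring
        rw [Finset.sum_congr rfl fun i _ => step i, Finset.sum_sub_distrib]
        simp
      have key2 : (1/(n:ℝ)) *
          ((n:ℝ) - (∑ i, if j ∈ A i then (∑ k ∈ A i, phat k)⁻¹ else 0)) ≤ 0 := by
        rw [← e]; exact key
      rw [mul_sub, hinvn] at key2
      linarith
    · intro t ht
      constructor
      · intro k
        beta_reduce
        rcases eq_or_ne k j with rfl | hk
        · rw [if_pos rfl]
          nlinarith [mul_nonneg ht.1.le (hphat k), ht.1, ht.2]
        · rw [if_neg hk]
          nlinarith [mul_nonneg ht.1.le (hphat k), hphat k]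
      · intro i
        beta_reduce
        have hmass : ∑ k ∈ A i, (phat k + t * (phat k - (if k = j then (1:ℝ) else 0)))
            = (1+t) * (∑ k ∈ A i, phat k) - t * (if j ∈ A i then 1 else 0) := by
          rw [Finset.sum_add_distrib, ← Finset.mul_sum, Finset.sum_sub_distrib,
            Finset.sum_ite_eq' (A i) j (fun _ => (1:ℝ))]
          ring
        rw [hmass]
        split_ifs with h
        · have hSj : phat j ≤ ∑ k ∈ A i, phat k :=
            Finset.single_le_sum (fun k _ => hphat k) h
          nlinarith [hpos i, ht.1, ht.2, mul_nonneg ht.1.le (le_of_lt (hpos i))]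
        · nlinarith [hpos i, mul_nonneg ht.1.le (le_of_lt (hpos i))]
  · intro hkkt q hq hqs hqpos
    rw [hℓ q, hℓ phat]
    have hlog : ∀ i : Fin n, Real.log (∑ k ∈ A i, q k) - Real.log (∑ k ∈ A i, phat k)
        ≤ (∑ k ∈ A i, q k) / (∑ k ∈ A i, phat k) - 1 := by
      intro i
      have h1 : (0:ℝ) < (∑ k ∈ A i, q k) / (∑ k ∈ A i, phat k) :=
        div_pos (hqpos i) (hpos i)
      have h2 := Real.log_le_sub_one_of_pos h1
      rwa [Real.log_div (ne_of_gt (hqpos i)) (ne_of_gt (hpos i))] at h2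
    have hswap : ∑ i, (∑ k ∈ A i, q k) / (∑ k ∈ A i, phat k)
        = ∑ k, q k * (∑ i, if k ∈ A i then (∑ k' ∈ A i, phat k')⁻¹ else 0) := by
      calc ∑ i, (∑ k ∈ A i, q k) / (∑ k ∈ A i, phat k)
          = ∑ i, ∑ k ∈ A i, q k * (∑ k' ∈ A i, phat k')⁻¹ := by
            refine Finset.sum_congr rfl fun i _ => ?_
            rw [div_eq_mul_inv, Finset.sum_mul]
        _ = ∑ i, ∑ k : Fin m, (if k ∈ A i then q k * (∑ k' ∈ A i, phat k')⁻¹ else 0) := by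
            refine Finset.sum_congr rfl fun i _ => ?_
            rw [Finset.sum_ite_mem, Finset.univ_inter]
        _ = ∑ k : Fin m, ∑ i, (if k ∈ A i then q k * (∑ k' ∈ A i, phat k')⁻¹ else 0) :=
            Finset.sum_comm
        _ = ∑ k, q k * (∑ i, if k ∈ A i then (∑ k' ∈ A i, phat k')⁻¹ else 0) := by
            refine Finset.sum_congr rfl fun k _ => ?_
            rw [Finset.mul_sum]
            exact Finset.sum_congr rfl fun i _ => by rw [mul_ite, mul_zero]
    have hbound : ∑ i, (∑ k ∈ A i, q k) / (∑ k ∈ A i, phat k) ≤ n := by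
      rw [hswap]
      calc ∑ k, q k * (∑ i, if k ∈ A i then (∑ k' ∈ A i, phat k')⁻¹ else 0)
          ≤ ∑ k, q k * n := by
            refine Finset.sum_le_sum fun k _ => ?_
            refine mul_le_mul_of_nonneg_left ?_ (hq k)
            have := (hkkt k).1
            nlinarith
        _ = n := by rw [← Finset.sum_mul, hqs, one_mul]
    have hsumlog : ∑ i, Real.log (∑ k ∈ A i, q k) ≤ ∑ i, Real.log (∑ k ∈ A i, phat k) := by
      have h1 : ∑ i, (Real.log (∑ k ∈ A i, q k) - Real.log (∑ k ∈ A i, phat k))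
          ≤ ∑ i, ((∑ k ∈ A i, q k) / (∑ k ∈ A i, phat k) - 1) :=
        Finset.sum_le_sum fun i _ => hlog i
      rw [Finset.sum_sub_distrib, Finset.sum_sub_distrib] at h1
      simp only [Finset.sum_const, Finset.card_univ, Fintype.card_fin, nsmul_eq_mul,
        mul_one] at h1
      linarith [hbound]
    exact mul_le_mul_of_nonneg_left hsumlog (by positivity)
end

section
/- EM monotonicity for the mixture likelihood: one step of the EM iteration p_j' = p_j·(1/n)·Σ_{i=1}^n 1_{j∈A_i}/(Σ_{k∈A_i} p_k) does not decrease the log-likelihood: ℓ(p') ≥ ℓ(p), where ℓ(p) = (1/n)·Σ_{i=1}^n log(Σ_{j∈A_i} p_j). -/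
lemma jensen_log {ι : Type*} (t : Finset ι) (w x : ι → ℝ)
    (hw : ∀ i ∈ t, 0 ≤ w i) (hw1 : ∑ i ∈ t, w i = 1)
    (hx : ∀ i ∈ t, 0 < x i) :
    ∑ i ∈ t, w i * Real.log (x i) ≤ Real.log (∑ i ∈ t, w i * x i) := by
  have := (strictConcaveOn_log_Ioi.concaveOn).le_map_sum hw hw1 (p := x) hx
  simpa [smul_eq_mul] using this

/-- One EM step does not decrease the mixture log-likelihood
`ℓ(p) = (1/n) ∑ᵢ log (∑_{j ∈ Aᵢ} p_j)`. -/
theorem em_step_increases_loglik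
    (m n : ℕ) (hm : 0 < m) (hn : 0 < n)
    (A : Fin n → Finset (Fin m)) (hA : ∀ i, (A i).Nonempty)
    (ℓ : (Fin m → ℝ) → ℝ)
    (hℓ : ∀ q : Fin m → ℝ, ℓ q = (1 / (n : ℝ)) * ∑ i, Real.log (∑ j ∈ A i, q j))
    (p : Fin m → ℝ) (hp : ∀ j, 0 ≤ p j) (hsum : ∑ j, p j = 1)
    (hpos : ∀ i, 0 < ∑ k ∈ A i, p k)
    (p' : Fin m → ℝ)
    (hp' : ∀ j, p' j =
      p j * ((1 / (n : ℝ)) * ∑ i, (if j ∈ A i then (∑ k ∈ A i, p k)⁻¹ else 0))) :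
    ℓ p ≤ ℓ p' := by
  set S : Fin n → ℝ := fun i => ∑ k ∈ A i, p k with hSdef
  have hnpos : (0:ℝ) < n := by exact_mod_cast hn
  have hitenn : ∀ (j : Fin m) (i : Fin n), 0 ≤ (if j ∈ A i then (S i)⁻¹ else 0) := by
    intro j i
    split_ifs
    · exact (inv_pos.2 (hpos i)).le
    · exact le_refl 0
  have hp'nn : ∀ j, 0 ≤ p' j := by
    intro j
    rw [hp' j]
    exact mul_nonneg (hp j) (mul_nonneg (by positivity)
      (Finset.sum_nonneg fun i _ => hitenn j i))
  have hp'zero : ∀ j, p j = 0 → p' j = 0 := by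
    intro j h; rw [hp' j, h, zero_mul]
  have hp'pos : ∀ i, ∀ j ∈ A i, 0 < p j → 0 < p' j := by
    intro i j hj hpj
    rw [hp' j]
    refine mul_pos hpj (mul_pos (by positivity) ?_)
    have h1 : (if j ∈ A i then (S i)⁻¹ else 0) ≤
        ∑ i', (if j ∈ A i' then (S i')⁻¹ else 0) :=
      Finset.single_le_sum (fun i' _ => hitenn j i') (Finset.mem_univ i)
    have h2 : (0:ℝ) < (S i)⁻¹ := inv_pos.2 (hpos i)
    simp only [hj, if_true] at h1
    linarith
  -- generic sum-swap helper
  have helper : ∀ g : Fin m → ℝ,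
      ∑ j, g j * ((1/(n:ℝ)) * ∑ i, (if j ∈ A i then (S i)⁻¹ else 0))
        = (1/(n:ℝ)) * ∑ i, (∑ j ∈ A i, g j) * (S i)⁻¹ := by
    intro g
    have : ∀ j, g j * ((1/(n:ℝ)) * ∑ i, (if j ∈ A i then (S i)⁻¹ else 0))
        = (1/(n:ℝ)) * ∑ i, (if j ∈ A i then g j * (S i)⁻¹ else 0) := by
      intro j
      simp only [Finset.mul_sum]
      refine Finset.sum_congr rfl fun i _ => ?_
      split_ifs <;> ring
    simp only [this]
    rw [← Finset.mul_sum, Finset.sum_comm]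
    congr 1
    refine Finset.sum_congr rfl fun i _ => ?_
    rw [Finset.sum_ite_mem, Finset.univ_inter, Finset.sum_mul]
  have hp'sum : ∑ j, p' j = 1 := by
    have := helper p
    rw [show (∑ j, p j * ((1/(n:ℝ)) * ∑ i, (if j ∈ A i then (S i)⁻¹ else 0))) = ∑ j, p' j from
      Finset.sum_congr rfl fun j _ => (hp' j).symm] at this
    rw [this]
    have : ∀ i : Fin n, (∑ j ∈ A i, p j) * (S i)⁻¹ = 1 := fun i =>
      mul_inv_cancel₀ (hpos i).ne'
    simp only [this, Finset.sum_const, Finset.card_univ, Fintype.card_fin, nsmul_eq_mul,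
      mul_one]
    field_simp
  -- per-i Jensen inequality
  have per_i : ∀ i, ∑ j ∈ (A i).filter (fun j => 0 < p j),
      (p j * Real.log (p' j / p j)) * (S i)⁻¹
      ≤ Real.log (∑ j ∈ A i, p' j) - Real.log (S i) := by
    intro i
    set F := (A i).filter (fun j => 0 < p j) with hF
    have hFsub : F ⊆ A i := Finset.filter_subset _ _
    have hFsum : ∑ j ∈ F, p j = S i := by
      rw [hSdef]
      refine Finset.sum_subset hFsub fun j hj hj' => ?_
      by_contra h
      exact hj' (Finset.mem_filter.2 ⟨hj, lt_of_le_of_ne (hp j) (Ne.symm h)⟩)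
    have hxpos : ∀ j ∈ F, 0 < p' j / p j := by
      intro j hj
      obtain ⟨hjA, hjp⟩ := Finset.mem_filter.1 hj
      exact div_pos (hp'pos i j hjA hjp) hjp
    have hw : ∀ j ∈ F, 0 ≤ p j / S i := fun j hj =>
      div_nonneg (hp j) (hpos i).le
    have hw1 : ∑ j ∈ F, p j / S i = 1 := by
      rw [← Finset.sum_div, hFsum, div_self (hpos i).ne']
    have hJ := jensen_log F (fun j => p j / S i) (fun j => p' j / p j) hw hw1 hxpos
    have hwx : ∑ j ∈ F, (p j / S i) * (p' j / p j) = (∑ j ∈ F, p' j) / S i := by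
      have hterm : ∀ j ∈ F, (p j / S i) * (p' j / p j) = p' j / S i := by
        intro j hj
        have hpj : p j ≠ 0 := (Finset.mem_filter.1 hj).2.ne'
        rw [div_mul_div_comm, mul_comm (S i) (p j), mul_div_mul_left _ _ hpj]
      rw [Finset.sum_congr rfl hterm, ← Finset.sum_div]
    have hFne : F.Nonempty := by
      obtain ⟨j, hjA, hj0⟩ := Finset.exists_ne_zero_of_sum_ne_zero (hpos i).ne'
      exact ⟨j, Finset.mem_filter.2 ⟨hjA, lt_of_le_of_ne (hp j) (Ne.symm hj0)⟩⟩
    have hFp' : 0 < ∑ j ∈ F, p' j :=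
      Finset.sum_pos (fun j hj => by
        obtain ⟨hjA, hjp⟩ := Finset.mem_filter.1 hj
        exact hp'pos i j hjA hjp) hFne
    have hle : (∑ j ∈ F, p' j) ≤ ∑ j ∈ A i, p' j :=
      Finset.sum_le_sum_of_subset_of_nonneg hFsub (fun j _ _ => hp'nn j)
    calc ∑ j ∈ F, (p j * Real.log (p' j / p j)) * (S i)⁻¹
        = ∑ j ∈ F, (p j / S i) * Real.log (p' j / p j) := by
          refine Finset.sum_congr rfl fun j hj => ?_; ring
      _ ≤ Real.log (∑ j ∈ F, (p j / S i) * (p' j / p j)) := hJ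
      _ = Real.log ((∑ j ∈ F, p' j) / S i) := by rw [hwx]
      _ ≤ Real.log ((∑ j ∈ A i, p' j) / S i) := by
          apply Real.log_le_log (div_pos hFp' (hpos i))
          gcongr
          exact (hpos i).le
      _ = Real.log (∑ j ∈ A i, p' j) - Real.log (S i) :=
          Real.log_div (lt_of_lt_of_le hFp' hle).ne' (hpos i).ne'
  -- now combine
  set L : Fin m → ℝ := fun j => Real.log (p' j / p j) with hL
  set g : Fin m → ℝ := fun j => if 0 < p j then p j * L j else 0 with hg
  have hD := helper g
  have hDlhs : ∑ j, g j * ((1/(n:ℝ)) * ∑ i, (if j ∈ A i then (S i)⁻¹ else 0))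
      = ∑ j, (if 0 < p j then p' j * L j else 0) := by
    refine Finset.sum_congr rfl fun j _ => ?_
    by_cases h : 0 < p j
    · simp only [hg, h, if_true]
      rw [hp' j]; ring
    · simp [hg, h]
  have hDrhs : ∀ i, (∑ j ∈ A i, g j) * (S i)⁻¹
      = ∑ j ∈ (A i).filter (fun j => 0 < p j), (p j * L j) * (S i)⁻¹ := by
    intro i
    rw [Finset.sum_filter, Finset.sum_mul]
    refine Finset.sum_congr rfl fun j _ => ?_
    by_cases h : 0 < p j <;> simp [hg, h]
  have hKL : 0 ≤ ∑ j, (if 0 < p j then p' j * L j else 0) := by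
    have hterm : ∀ j, p' j - p j ≤ (if 0 < p j then p' j * L j else 0) := by
      intro j
      by_cases h : 0 < p j
      · simp only [h, if_true]
        by_cases h' : 0 < p' j
        · have hlog : Real.log (p j / p' j) ≤ p j / p' j - 1 :=
            Real.log_le_sub_one_of_pos (div_pos h h')
          have hLj : L j = - Real.log (p j / p' j) := by
            simp only [hL]
            rw [← Real.log_inv, inv_div]
          rw [hLj]
          have h2 := mul_le_mul_of_nonneg_left hlog h'.le
          have hc : p' j * (p j / p' j - 1) = p j - p' j := by
            field_simp
          nlinarith
        · have hp0 : p' j = 0 := le_antisymm (not_lt.1 h') (hp'nn j)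
          rw [hp0, zero_mul]
          linarith [hp j]
      · simp only [h, if_false]
        have h0 : p j = 0 := le_antisymm (not_lt.1 h) (hp j)
        rw [hp'zero j h0, h0]
        norm_num
    calc (0:ℝ) = ∑ j, (p' j - p j) := by
          rw [Finset.sum_sub_distrib, hp'sum, hsum]; ring
      _ ≤ _ := Finset.sum_le_sum (fun j _ => hterm j)
  have hmain : ∑ j, (if 0 < p j then p' j * L j else 0) ≤ ℓ p' - ℓ p := by
    rw [← hDlhs, hD, hℓ p, hℓ p', ← mul_sub, ← Finset.sum_sub_distrib]
    apply mul_le_mul_of_nonneg_left _ (by positivity)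
    apply Finset.sum_le_sum
    intro i _
    rw [hDrhs i]
    exact per_i i
  linarith
end
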